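/- arXiv:0903.1173 — 7 statements merged into one kernel-verified Lean document; each statement's English description precedes it below -/
import Mathlib

section
/- Let C be a small category with finite limits and let L be the full subcategory of the functor category C ⥤ Type spanned by the functors preserving finite limits (the left exact presheaves). Then the inclusion functor L ⥤ (C ⥤ Type) has a left adjoint (L is a reflective subcategory of the presheaf category). -/
open CategoryTheory CategoryTheory.Limits

noncomputable section LexReflection

/-! ### Generalities on fans in `Type` -/

/-- A fan in `Type` whose comparison map to the pi type is bijective is a limit fan. -/
noncomputable def isLimitFanOfBijective {J : Type} {A : J → Type} {pt : Type}
    (p : ∀ j, pt ⟶ A j) (hb : Function.Bijective fun x j => p j x) :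
    IsLimit (Fan.mk pt p) where
  lift s := ↾fun x => (Equiv.ofBijective _ hb).symm fun j => s.π.app ⟨j⟩ x
  fac s := by
    rintro ⟨j⟩
    ext x
    exact congrFun ((Equiv.ofBijective _ hb).apply_symm_apply fun j => s.π.app ⟨j⟩ x) j
  uniq s m hm := by
    ext x
    apply hb.1
    funext j
    have h1 : p j (m x) = s.π.app ⟨j⟩ x := types_congr_hom (hm ⟨j⟩) x
    have h2 : (fun j => p j ((Equiv.ofBijective _ hb).symm fun j => s.π.app ⟨j⟩ x)) =
        fun j => s.π.app ⟨j⟩ x :=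
      (Equiv.ofBijective _ hb).apply_symm_apply _
    show p j (m x) = p j ((Equiv.ofBijective _ hb).symm fun j => s.π.app ⟨j⟩ x)
    rw [h1]
    exact (congrFun h2 j).symm

/-- The comparison map of a limit fan in `Type` is bijective. -/
theorem bijective_of_isLimitFan {J : Type} {A : J → Type} {pt : Type}
    {p : ∀ j, pt ⟶ A j} (h : IsLimit (Fan.mk pt p)) :
    Function.Bijective fun x j => p j x := by
  constructor
  · intro x y hxy
    have := h.hom_ext (f := ↾fun _ : PUnit => x) (f' := ↾fun _ : PUnit => y) (by
      rintro ⟨j⟩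
      ext u
      exact congrFun hxy j)
    exact types_congr_hom this PUnit.unit
  · intro f
    let s : Fan A := Fan.mk PUnit fun j => ↾fun _ => f j
    refine ⟨h.lift s PUnit.unit, funext fun j => ?_⟩
    exact types_congr_hom (h.fac s ⟨j⟩) PUnit.unit

section Lex

variable {C : Type} [SmallCategory C] [HasFiniteLimits C]

/-- The comparison map of a finite-limit-preserving functor at a finite product is bijective. -/
theorem lex_pi_bijective (G : C ⥤ Type) [PreservesFiniteLimits G] {n : ℕ} (K : Fin n → C) :
    Function.Bijective fun (y : G.obj (∏ᶜ K)) (i : Fin n) => G.map (Pi.π K i) y :=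
  bijective_of_isLimitFan (isLimitFanMkObjOfIsLimit G K (Pi.π K) (productIsProduct K))

/-- The image under a finite-limit-preserving functor of the equalizer fork is a limit fork. -/
theorem lex_equalizer_unique (G : C ⥤ Type) [PreservesFiniteLimits G] {c c' : C}
    (f g : c ⟶ c') (y : G.obj c) (hy : G.map f y = G.map g y) :
    ∃! x : G.obj (equalizer f g), G.map (equalizer.ι f g) x = y :=
  Types.unique_of_type_equalizer _ _
    (isLimitForkMapOfIsLimit G (equalizer.condition f g) (equalizerIsEqualizer f g)) y hy

theorem lex_equalizer_ι_injective (G : C ⥤ Type) [PreservesFiniteLimits G] {c c' : C}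
    (f g : c ⟶ c') : Function.Injective (G.map (equalizer.ι f g)) := by
  intro a b hab
  have hy : G.map f (G.map (equalizer.ι f g) a) = G.map g (G.map (equalizer.ι f g) a) := by
    rw [← types_comp_apply (G.map (equalizer.ι f g)) (G.map f), ← G.map_comp,
      equalizer.condition f g, G.map_comp]
    rfl
  obtain ⟨x, _, hu⟩ := lex_equalizer_unique G f g (G.map (equalizer.ι f g) a) hy
  exact (hu a rfl).trans (hu b hab.symm).symm

/-! ### The lex closure of the image of a natural transformation -/

variable {P G : C ⥤ Type}

/-- Membership in the smallest "lex subfunctor" of `G` containing the image of `h : P ⟶ G`. -/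
inductive LexMem (h : P ⟶ G) : ∀ c : C, G.obj c → Prop
  | img (c : C) (x : P.obj c) : LexMem h c (h.app c x)
  | map {c c' : C} (f : c ⟶ c') {y : G.obj c} : LexMem h c y → LexMem h c' (G.map f y)
  | prod (n : ℕ) (K : Fin n → C) (y : G.obj (∏ᶜ K))
      (hy : ∀ i, LexMem h (K i) (G.map (Pi.π K i) y)) : LexMem h (∏ᶜ K) y
  | eq {c c' : C} (f g : c ⟶ c') (y : G.obj (equalizer f g))
      (hy : LexMem h c (G.map (equalizer.ι f g) y)) : LexMem h (equalizer f g) y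

/-- The lex closure of the image of `h`, as a functor. -/
@[simps]
def LexSub (h : P ⟶ G) : C ⥤ Type where
  obj c := { y : G.obj c // LexMem h c y }
  map f := ↾fun y => ⟨G.map f y.1, LexMem.map f y.2⟩
  map_id c := by ext y; exact types_congr_hom (G.map_id c) y.1
  map_comp f g := by ext y; exact types_congr_hom (G.map_comp f g) y.1

/-- The inclusion of the lex closure into `G`. -/
@[simps]
def LexSub.ι (h : P ⟶ G) : LexSub h ⟶ G where
  app c := ↾Subtype.val

/-- The corestriction of `h` to the lex closure. -/
@[simps]
def LexSub.corestrict (h : P ⟶ G) : P ⟶ LexSub h where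
  app c := ↾fun x => ⟨h.app c x, LexMem.img c x⟩
  naturality c c' f := by
    ext x
    exact Subtype.ext (types_congr_hom (h.naturality f) x)

variable [PreservesFiniteLimits G]

theorem LexSub.preservesProd (h : P ⟶ G) {n : ℕ} (K : Fin n → C) :
    PreservesLimit (Discrete.functor K) (LexSub h) := by
  apply preservesLimit_of_preserves_limit_cone (productIsProduct K)
  apply (isLimitMapConeFanMkEquiv _ _ _).symm _
  apply isLimitFanOfBijective (fun i => (LexSub h).map (Pi.π K i))
  constructor
  · intro y z hyz
    apply Subtype.ext
    apply (lex_pi_bijective G K).1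
    funext i
    exact congrArg Subtype.val (congrFun hyz i)
  · intro x
    obtain ⟨y, hy⟩ := (lex_pi_bijective G K).2 fun i => (x i).1
    have hy' : ∀ i, G.map (Pi.π K i) y = (x i).1 := fun i => congrFun hy i
    have mem : LexMem h (∏ᶜ K) y :=
      LexMem.prod n K y fun i => (hy' i).symm ▸ (x i).2
    exact ⟨⟨y, mem⟩, funext fun i => Subtype.ext (hy' i)⟩

instance LexSub.preservesFiniteProducts (h : P ⟶ G) :
    PreservesFiniteProducts (LexSub h) := by
  constructor
  intro n
  constructor
  intro K
  haveI := LexSub.preservesProd h (K.obj ∘ Discrete.mk)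
  exact preservesLimit_of_iso_diagram (LexSub h) Discrete.natIsoFunctor.symm

instance LexSub.preservesEqualizers (h : P ⟶ G) :
    PreservesLimitsOfShape WalkingParallelPair (LexSub h) := by
  constructor
  intro K
  set f := K.map WalkingParallelPairHom.left with hf
  set g := K.map WalkingParallelPairHom.right with hg
  haveI : PreservesLimit (parallelPair f g) (LexSub h) := ?_
  · exact preservesLimit_of_iso_diagram (LexSub h) (diagramIsoParallelPair K).symm
  apply preservesLimit_of_preserves_limit_cone (equalizerIsEqualizer f g)
  apply (isLimitMapConeForkEquiv _ _).symm _
  apply Types.typeEqualizerOfUnique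
  intro y hy
  have hy' : G.map f y.1 = G.map g y.1 := by
    have h1 : (LexSub h).map f y = (LexSub h).map g y := hy
    exact congrArg Subtype.val h1
  obtain ⟨x, hx, hu⟩ := lex_equalizer_unique G f g y.1 hy'
  have mem : LexMem h (equalizer f g) x := LexMem.eq f g x (hx ▸ y.2)
  refine ⟨⟨x, mem⟩, Subtype.ext hx, ?_⟩
  intro z hz
  exact Subtype.ext (hu z.1 (congrArg Subtype.val hz))

instance LexSub.preservesFiniteLimits (h : P ⟶ G) : PreservesFiniteLimits (LexSub h) :=
  preservesFiniteLimits_of_preservesEqualizers_and_finiteProducts _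

/-! ### Trees: a small parametrization of the elements of the lex closure -/

/-- Formal derivation trees of elements of the lex closure of a map out of `P`. This type
depends only on `P` (and `C`), not on the target functor; it is used to provide a small
parametrization of the possible lex closures. -/
inductive LexTree (P : C ⥤ Type) : C → Type
  | leaf (c : C) (x : P.obj c) : LexTree P c
  | map {c c' : C} (f : c ⟶ c') : LexTree P c → LexTree P c'
  | prod (n : ℕ) (K : Fin n → C) : (∀ i, LexTree P (K i)) → LexTree P (∏ᶜ K)
  | eq {c c' : C} (f g : c ⟶ c') : LexTree P c → LexTree P (equalizer f g)

open Classical in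
/-- Evaluate a derivation tree to an element of `G`, when possible. -/
noncomputable def evalTree (h : P ⟶ G) : ∀ {c : C}, LexTree P c → Option (G.obj c)
  | _, .leaf c x => some (h.app c x)
  | _, .map f t => (evalTree h t).map (G.map f)
  | _, .prod n K ts =>
      if hs : ∀ i, (evalTree h (ts i)).isSome then
        some ((Equiv.ofBijective _ (lex_pi_bijective G K)).symm
          fun i => (evalTree h (ts i)).get (hs i))
      else none
  | _, .eq f g t =>
      (evalTree h t).bind fun x =>
        if hx : ∃ y : G.obj (equalizer f g), G.map (equalizer.ι f g) y = x then some hx.choose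
        else none

theorem exists_lexTree (h : P ⟶ G) {c : C} {y : G.obj c} (m : LexMem h c y) :
    ∃ t : LexTree P c, evalTree h t = some y := by
  induction m with
  | img c x => exact ⟨.leaf c x, rfl⟩
  | map f _ ih =>
      obtain ⟨t, ht⟩ := ih
      exact ⟨.map f t, by rw [evalTree, ht]; rfl⟩
  | prod n K y _ ih =>
      choose t ht using ih
      refine ⟨.prod n K t, ?_⟩
      rw [evalTree]
      have hs : ∀ i, (evalTree h (t i)).isSome := fun i => by rw [ht i]; rfl
      rw [dif_pos hs]
      congr 1
      have hget : (fun i => (evalTree h (t i)).get (hs i)) =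
          fun i => G.map (Pi.π K i) y := by
        funext i
        have := ht i
        exact Option.get_of_mem (hs i) this
      rw [hget]
      exact (Equiv.ofBijective _ (lex_pi_bijective G K)).symm_apply_apply y
  | eq f g y _ ih =>
      obtain ⟨t, ht⟩ := ih
      refine ⟨.eq f g t, ?_⟩
      rw [evalTree, ht]
      have hx : ∃ z : G.obj (equalizer f g),
          G.map (equalizer.ι f g) z = G.map (equalizer.ι f g) y := ⟨y, rfl⟩
      rw [Option.bind_some, dif_pos hx]
      exact congrArg some (lex_equalizer_ι_injective G f g hx.choose_spec)

/-- A choice of derivation tree for each element of the lex closure. -/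
noncomputable def treeOf (h : P ⟶ G) (c : C) (y : (LexSub h).obj c) : LexTree P c :=
  (exists_lexTree h y.2).choose

theorem evalTree_treeOf (h : P ⟶ G) (c : C) (y : (LexSub h).obj c) :
    evalTree h (treeOf h c y) = some y.1 :=
  (exists_lexTree h y.2).choose_spec

theorem treeOf_injective (h : P ⟶ G) (c : C) : Function.Injective (treeOf h c) := by
  intro a b hab
  apply Subtype.ext
  apply Option.some_injective
  rw [← evalTree_treeOf h c a, ← evalTree_treeOf h c b, hab]

/-! ### The solution set -/

/-- The data of a functor whose values are sets of derivation trees, together with a natural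
transformation from `P`. This is a small type parametrizing the candidate factorizations. -/
structure LexDatum (P : C ⥤ Type) : Type where
  U : ∀ c : C, Set (LexTree P c)
  m : ∀ {c c' : C}, (c ⟶ c') → U c → U c'
  m_id : ∀ (c : C) (x : U c), m (𝟙 c) x = x
  m_comp : ∀ {c c' c'' : C} (f : c ⟶ c') (g : c' ⟶ c'') (x : U c), m (f ≫ g) x = m g (m f x)
  e : ∀ c : C, P.obj c → U c
  e_nat : ∀ {c c' : C} (f : c ⟶ c') (x : P.obj c), m f (e c x) = e c' (P.map f x)

/-- The functor associated to a `LexDatum`. -/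
@[simps]
def LexDatum.F (d : LexDatum P) : C ⥤ Type where
  obj c := d.U c
  map f := ↾(d.m f)
  map_id c := by ext x; exact congrArg Subtype.val (d.m_id c x)
  map_comp f g := by ext x; exact congrArg Subtype.val (d.m_comp f g x)

/-- The natural transformation from `P` associated to a `LexDatum`. -/
@[simps]
def LexDatum.η (d : LexDatum P) : P ⟶ d.F where
  app c := ↾(d.e c)
  naturality c c' f := by ext x; exact (d.e_nat f x).symm

/-- The `LexDatum` associated to a natural transformation `h : P ⟶ G` with `G` lex. -/
noncomputable def lexDatumOf (h : P ⟶ G) : LexDatum P where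
  U c := Set.range (treeOf h c)
  m {c c'} f x := (Equiv.ofInjective _ (treeOf_injective h c'))
    ((LexSub h).map f ((Equiv.ofInjective _ (treeOf_injective h c)).symm x))
  m_id c x := by
    show (Equiv.ofInjective _ (treeOf_injective h c))
      ((LexSub h).map (𝟙 c) ((Equiv.ofInjective _ (treeOf_injective h c)).symm x)) = x
    rw [(LexSub h).map_id]
    simp
  m_comp {c c' c''} f g x := by
    show (Equiv.ofInjective _ (treeOf_injective h c''))
        ((LexSub h).map (f ≫ g) ((Equiv.ofInjective _ (treeOf_injective h c)).symm x)) =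
      (Equiv.ofInjective _ (treeOf_injective h c''))
        ((LexSub h).map g ((Equiv.ofInjective _ (treeOf_injective h c')).symm
          ((Equiv.ofInjective _ (treeOf_injective h c'))
            ((LexSub h).map f ((Equiv.ofInjective _ (treeOf_injective h c)).symm x)))))
    rw [(LexSub h).map_comp]
    simp
    rfl
  e c x := (Equiv.ofInjective _ (treeOf_injective h c)) ((LexSub.corestrict h).app c x)
  e_nat {c c'} f x := by
    simp only [Equiv.symm_apply_apply]
    congr 1
    exact types_congr_hom ((LexSub.corestrict h).naturality f).symm x

/-- The functor of `lexDatumOf h` is isomorphic to the lex closure. -/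
noncomputable def lexDatumOfIso (h : P ⟶ G) : (lexDatumOf h).F ≅ LexSub h :=
  NatIso.ofComponents
    (fun c => (Equiv.ofInjective _ (treeOf_injective h c)).symm.toIso)
    (fun {c c'} f => by
      ext x
      simp [lexDatumOf, LexDatum.F, TypeCat.Fun.toFun_apply]
      exact (Equiv.ofInjective _ (treeOf_injective h c')).symm_apply_apply _)

theorem lexDatumOf_preservesFiniteLimits (h : P ⟶ G) :
    PreservesFiniteLimits (lexDatumOf h).F :=
  preservesFiniteLimits_of_natIso (lexDatumOfIso h).symm

/-! ### Completeness of the category of lex functors -/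

theorem lex_closedUnderLimitsOfShape (J : Type) [SmallCategory J] :
    ObjectProperty.IsClosedUnderLimitsOfShape (fun F : C ⥤ Type => PreservesFiniteLimits F) J := by
  constructor
  rintro X ⟨⟨⟨F, π, hc⟩, hF⟩⟩
  have h1 : PreservesFiniteLimits F.flip := by
    constructor
    intro J' _ _
    exact preservesLimitsOfShape_of_evaluation _ _ fun k =>
      haveI : PreservesFiniteLimits (F.obj k) := hF k
      preservesLimitsOfShape_of_natIso (flipCompEvaluation F k).symm
  have h2 : PreservesLimits (lim : (J ⥤ Type) ⥤ Type) :=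
    (constLimAdj (J := J) (C := Type)).rightAdjoint_preservesLimits
  have h3 : PreservesFiniteLimits (lim : (J ⥤ Type) ⥤ Type) :=
    PreservesLimitsOfSize.preservesFiniteLimits _
  have h4 : PreservesFiniteLimits (F.flip ⋙ lim) := comp_preservesFiniteLimits _ _
  exact preservesFiniteLimits_of_natIso
    ((limitIsoFlipCompLim F).symm ≪≫ (hc.conePointUniqueUpToIso (limit.isLimit F)).symm)

end Lex

end LexReflection

/-- Barr embedding paper, setting: `L = Lex(C, Type)` is reflective in presheaves. -/
theorem lex_inclusion_isRightAdjoint (C : Type) [SmallCategory C] [HasFiniteLimits C] :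
    (ObjectProperty.ι (fun F : C ⥤ Type => PreservesFiniteLimits F)).IsRightAdjoint := by
  haveI : HasLimits (ObjectProperty.FullSubcategory fun F : C ⥤ Type => PreservesFiniteLimits F) :=
    ⟨fun J _ => haveI := lex_closedUnderLimitsOfShape (C := C) J
      hasLimitsOfShape_of_closedUnderLimits _ _⟩
  haveI : PreservesLimits
      (ObjectProperty.ι fun F : C ⥤ Type => PreservesFiniteLimits F) := by
    constructor
    intro J _
    haveI := lex_closedUnderLimitsOfShape
      (C := C) J
    infer_instance
  apply isRightAdjoint_of_preservesLimits_of_solutionSetCondition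
  intro P
  refine ⟨{ d : LexDatum P // PreservesFiniteLimits d.F }, fun i => ⟨i.1.F, i.2⟩,
    fun i => i.1.η, ?_⟩
  intro X h
  haveI : PreservesFiniteLimits
      ((ObjectProperty.ι fun F : C ⥤ Type => PreservesFiniteLimits F).obj X) := X.2
  refine ⟨⟨lexDatumOf h, lexDatumOf_preservesFiniteLimits h⟩, ?_, ?_⟩
  · exact ObjectProperty.homMk ((lexDatumOfIso h).hom ≫ LexSub.ι h :
      (lexDatumOf h).F ⟶ ((ObjectProperty.ι fun F : C ⥤ Type =>
        PreservesFiniteLimits F).obj X))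
  apply NatTrans.ext
  funext c
  ext x
  show (LexSub.ι h).app c ((lexDatumOfIso h).hom.app c ((lexDatumOf h).η.app c x)) = h.app c x
  simp [lexDatumOf, lexDatumOfIso, LexSub.corestrict]
  exact congrArg Subtype.val ((Equiv.ofInjective _ (treeOf_injective h c)).symm_apply_apply _)
end

section
/- Let C be a small category with finite limits and let L be the full subcategory of C ⥤ Type on the left exact presheaves. Then L has all small limits and all small colimits (L is complete and cocomplete). -/
open CategoryTheory CategoryTheory.Limits

namespace LexProp1
set_option linter.unusedSectionVars false

variable {C : Type} [SmallCategory C] [HasFiniteLimits C]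

lemma closedUnderLimits (J : Type) [SmallCategory J] :
    ObjectProperty.IsClosedUnderLimitsOfShape (fun F : C ⥤ Type => PreservesFiniteLimits F) J := by
  have : ObjectProperty.IsClosedUnderIsomorphisms (fun F : C ⥤ Type => PreservesFiniteLimits F) :=
    ⟨fun e h => by exact preservesFiniteLimits_of_natIso e⟩
  constructor
  rintro X ⟨hX⟩
  refine ObjectProperty.prop_of_iso _
    ((limit.isLimit hX.diag).conePointUniqueUpToIso hX.isLimit) ?_
  have hF := hX.prop_diag_obj
  let F := hX.diag
  have : ∀ j, PreservesFiniteLimits (F.obj j) := hF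
  have h1 : PreservesFiniteLimits F.flip := by
    constructor; intro J' _ _
    apply preservesLimitsOfShape_of_evaluation
    intro j
    exact preservesLimitsOfShape_of_natIso (flipCompEvaluation F j).symm
  have h2 : PreservesFiniteLimits (F.flip ⋙ lim) := comp_preservesFiniteLimits _ _
  exact preservesFiniteLimits_of_natIso (limitIsoFlipCompLim F).symm

section Elements

variable (G : C ⥤ Type) [PreservesFiniteLimits G]

/-- Bijectivity (∃!-form) of the limit comparison for a lex functor to `Type`. -/
lemma exu {J : Type} [SmallCategory J] (K : J ⥤ C) [HasLimit K] [PreservesLimit K G]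
    (s : ∀ j, G.obj (K.obj j)) (hs : ∀ {j j'} (f : j ⟶ j'), G.map (K.map f) (s j) = s j') :
    ∃! x : G.obj (limit K), ∀ j, G.map (limit.π K j) x = s j := by
  have h := (Types.isLimit_iff (G.mapCone (limit.cone K))).1
    ⟨isLimitOfPreserves G (limit.isLimit K)⟩ s (fun f => hs f)
  exact h

lemma lex_inj {J : Type} [SmallCategory J] (K : J ⥤ C) [HasLimit K] [PreservesLimit K G]
    {x y : G.obj (limit K)} (hxy : ∀ j, G.map (limit.π K j) x = G.map (limit.π K j) y) :
    x = y := by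
  have h := exu G K (fun j => G.map (limit.π K j) y)
    (fun {j j'} f => by rw [← FunctorToTypes.map_comp_apply, limit.w])
  exact h.unique hxy (fun j => rfl)

/-- The unique element of `G(⊤)`. -/
noncomputable def topElem : G.obj (⊤_ C) :=
  (exu G (Functor.empty.{0} C) (fun j => j.as.elim) (fun {j} _ _ => j.as.elim)).exists.choose

lemma topElem_eq (x : G.obj (⊤_ C)) : x = topElem G :=
  lex_inj G (Functor.empty.{0} C) (fun j => j.as.elim)

/-- Pairing into `G(a ⨯ b)`. -/
noncomputable def pairSection {a b : C} (v₁ : G.obj a) (v₂ : G.obj b) :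
    ∀ j : Discrete WalkingPair, G.obj ((pair a b).obj j) := fun j =>
  match j with
  | ⟨WalkingPair.left⟩ => v₁
  | ⟨WalkingPair.right⟩ => v₂

lemma pairSection_sections {a b : C} (v₁ : G.obj a) (v₂ : G.obj b) :
    ∀ {j j' : Discrete WalkingPair} (f : j ⟶ j'),
      G.map ((pair a b).map f) (pairSection G v₁ v₂ j) = pairSection G v₁ v₂ j' := by
  rintro ⟨j⟩ ⟨j'⟩ f
  obtain rfl : j = j' := Discrete.eq_of_hom f
  rw [Discrete.functor_map_id]
  simp

noncomputable def pairElem {a b : C} (v₁ : G.obj a) (v₂ : G.obj b) : G.obj (a ⨯ b) :=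
  (exu G (pair a b) (pairSection G v₁ v₂) (pairSection_sections G v₁ v₂)).exists.choose

lemma pairElem_fst {a b : C} (v₁ : G.obj a) (v₂ : G.obj b) :
    G.map prod.fst (pairElem G v₁ v₂) = v₁ :=
  (exu G (pair a b) (pairSection G v₁ v₂) (pairSection_sections G v₁ v₂)).exists.choose_spec
    ⟨WalkingPair.left⟩

lemma pairElem_snd {a b : C} (v₁ : G.obj a) (v₂ : G.obj b) :
    G.map prod.snd (pairElem G v₁ v₂) = v₂ :=
  (exu G (pair a b) (pairSection G v₁ v₂) (pairSection_sections G v₁ v₂)).exists.choose_spec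
    ⟨WalkingPair.right⟩

lemma pair_inj {a b : C} {x y : G.obj (a ⨯ b)}
    (h1 : G.map prod.fst x = G.map prod.fst y) (h2 : G.map prod.snd x = G.map prod.snd y) :
    x = y := by
  apply lex_inj G (pair a b)
  rintro ⟨j⟩
  cases j
  · exact h1
  · exact h2

/-- Lifting into `G(equalizer f g)`. -/
noncomputable def eqSection {a b : C} (f g : a ⟶ b) (v : G.obj a) :
    ∀ j : WalkingParallelPair, G.obj ((parallelPair f g).obj j) := fun j =>
  match j with
  | WalkingParallelPair.zero => v
  | WalkingParallelPair.one => G.map f v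

lemma eqSection_sections {a b : C} (f g : a ⟶ b) (v : G.obj a)
    (hv : G.map f v = G.map g v) :
    ∀ {j j' : WalkingParallelPair} (α : j ⟶ j'),
      G.map ((parallelPair f g).map α) (eqSection G f g v j) = eqSection G f g v j' := by
  intro j j' (α : WalkingParallelPairHom j j')
  cases α with
  | left => simp [eqSection, parallelPair_map_left]
  | right => simp [eqSection, parallelPair_map_right, hv]
  | id => simp [eqSection]

noncomputable def eqElem {a b : C} (f g : a ⟶ b) (v : G.obj a)
    (hv : G.map f v = G.map g v) : G.obj (equalizer f g) :=
  (exu G (parallelPair f g) (eqSection G f g v) (eqSection_sections G f g v hv)).exists.choose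

lemma eqElem_ι {a b : C} (f g : a ⟶ b) (v : G.obj a) (hv : G.map f v = G.map g v) :
    G.map (equalizer.ι f g) (eqElem G f g v hv) = v :=
  (exu G (parallelPair f g) (eqSection G f g v)
    (eqSection_sections G f g v hv)).exists.choose_spec WalkingParallelPair.zero

lemma eq_inj {a b : C} (f g : a ⟶ b) {x y : G.obj (equalizer f g)}
    (h1 : G.map (equalizer.ι f g) x = G.map (equalizer.ι f g) y) : x = y := by
  apply lex_inj G (parallelPair f g)
  intro j
  cases j with
  | zero => exact h1
  | one =>
    rw [← limit.w (parallelPair f g) WalkingParallelPairHom.left,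
      FunctorToTypes.map_comp_apply, FunctorToTypes.map_comp_apply, parallelPair_map_left]
    exact congrArg (G.map f) h1

end Elements

/-- Formal terms for the lex closure of the image of a natural transformation out of `A`. -/
inductive Tm (A : C ⥤ Type) : C → Type
  | base : ∀ {c : C}, A.obj c → Tm A c
  | map : ∀ {c c' : C}, (c ⟶ c') → Tm A c → Tm A c'
  | top : Tm A (⊤_ C)
  | pair : ∀ {a b : C}, Tm A a → Tm A b → Tm A (a ⨯ b)
  | eqlift : ∀ {a b : C} (f g : a ⟶ b), Tm A a → Tm A (equalizer f g)

section Eval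

variable {A : C ⥤ Type} (G : C ⥤ Type) [PreservesFiniteLimits G] (h : A ⟶ G)

open Classical in
noncomputable def eval : ∀ {c : C}, Tm A c → Option (G.obj c)
  | _, .base a => some (h.app _ a)
  | _, .map f t => Option.map (G.map f) (eval t)
  | _, .top => some (topElem G)
  | _, .pair t₁ t₂ =>
    match eval t₁, eval t₂ with
    | some v₁, some v₂ => some (pairElem G v₁ v₂)
    | _, _ => none
  | _, .eqlift f g t =>
    match eval t with
    | some v =>
      if hv : G.map f v = G.map g v then some (eqElem G f g v hv) else none
    | none => none

/-- The lex closure of the image of `h : A ⟶ G`. -/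
def S (c : C) : Set (G.obj c) := {x | ∃ t : Tm A c, eval G h t = some x}

lemma mem_S_base {c : C} (a : A.obj c) : h.app c a ∈ S G h c := ⟨.base a, rfl⟩

lemma mem_S_map {c c' : C} (f : c ⟶ c') {x : G.obj c} (hx : x ∈ S G h c) :
    G.map f x ∈ S G h c' := by
  obtain ⟨t, ht⟩ := hx
  exact ⟨.map f t, by rw [eval, ht]; rfl⟩

lemma mem_S_top (x : G.obj (⊤_ C)) : x ∈ S G h (⊤_ C) :=
  ⟨.top, by rw [eval, topElem_eq G x]⟩

lemma mem_S_pair {a b : C} (x : G.obj (a ⨯ b))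
    (h1 : G.map prod.fst x ∈ S G h a) (h2 : G.map prod.snd x ∈ S G h b) :
    x ∈ S G h (a ⨯ b) := by
  obtain ⟨t₁, ht₁⟩ := h1
  obtain ⟨t₂, ht₂⟩ := h2
  refine ⟨.pair t₁ t₂, ?_⟩
  rw [eval, ht₁, ht₂]
  exact congrArg some (pair_inj G (by rw [pairElem_fst]) (by rw [pairElem_snd]))

lemma mem_S_eq {a b : C} (f g : a ⟶ b) (x : G.obj (equalizer f g))
    (h1 : G.map (equalizer.ι f g) x ∈ S G h a) : x ∈ S G h (equalizer f g) := by
  obtain ⟨t, ht⟩ := h1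
  refine ⟨.eqlift f g t, ?_⟩
  rw [eval, ht]
  have hv : G.map f (G.map (equalizer.ι f g) x) = G.map g (G.map (equalizer.ι f g) x) := by
    rw [← FunctorToTypes.map_comp_apply, ← FunctorToTypes.map_comp_apply,
      equalizer.condition]
  dsimp only
  rw [dif_pos hv]
  exact congrArg some (eq_inj G f g (by rw [eqElem_ι]))

end Eval

section Sub

variable {A : C ⥤ Type} (G : C ⥤ Type) [PreservesFiniteLimits G] (h : A ⟶ G)

/-- The lex closure subfunctor. -/
@[simps]
noncomputable def H : C ⥤ Type where
  obj c := S G h c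
  map f := TypeCat.ofHom fun x => ⟨G.map f x.1, mem_S_map G h f x.2⟩
  map_id c := by
    refine ConcreteCategory.hom_ext _ _ fun x => ?_
    apply Subtype.ext
    simp
  map_comp f g := by
    refine ConcreteCategory.hom_ext _ _ fun x => ?_
    apply Subtype.ext
    simp

/-- Inclusion of the closure into `G`. -/
noncomputable def ν : H G h ⟶ G where
  app c := TypeCat.ofHom fun x => x.1
  naturality c c' f := rfl

/-- The corestriction of `h` to the closure. -/
noncomputable def θ : A ⟶ H G h where
  app c := TypeCat.ofHom fun a => ⟨h.app c a, mem_S_base G h a⟩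
  naturality c c' f := by
    ext a
    apply Subtype.ext
    exact types_congr_hom (h.naturality f) a

lemma θν : θ G h ≫ ν G h = h := rfl

/-- Key lemma: if the closure is closed under the `J`-limit projections condition for `K`,
then `H` preserves the limit of `K`. -/
lemma H_preservesLimit {J : Type} [SmallCategory J] (K : J ⥤ C)
    [HasLimit K] [PreservesLimit K G]
    (hcl : ∀ x : G.obj (limit K), (∀ j, G.map (limit.π K j) x ∈ S G h (K.obj j)) →
      x ∈ S G h (limit K)) :
    PreservesLimit K (H G h) := by
  apply preservesLimit_of_preserves_limit_cone (limit.isLimit K)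
  apply Nonempty.some
  rw [Types.isLimit_iff]
  intro s hs
  have hs' : ∀ {j j' : J} (f : j ⟶ j'), G.map (K.map f) (s j).1 = (s j').1 :=
    fun f => congrArg Subtype.val (hs f)
  obtain ⟨x, hx, hxu⟩ := exu G K (fun j => (s j).1) hs'
  have hxS : x ∈ S G h (limit K) := hcl x (fun j => by rw [hx j]; exact (s j).2)
  refine ⟨⟨x, hxS⟩, fun j => ?_, fun y hy => ?_⟩
  · apply Subtype.ext
    exact hx j
  · apply Subtype.ext
    exact hxu y.1 (fun j => congrArg Subtype.val (hy j))

lemma H_lex : PreservesFiniteLimits (H G h) := by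
  have hterm : PreservesLimit (Functor.empty.{0} C) (H G h) :=
    H_preservesLimit G h _ (fun x _ => mem_S_top G h x)
  have hpair : ∀ a b : C, PreservesLimit (pair a b) (H G h) := fun a b =>
    H_preservesLimit G h _ (fun x hx => mem_S_pair G h x (hx ⟨WalkingPair.left⟩)
      (hx ⟨WalkingPair.right⟩))
  have heq : ∀ {a b : C} (f g : a ⟶ b), PreservesLimit (parallelPair f g) (H G h) :=
    fun f g => H_preservesLimit G h _ (fun x hx =>
      mem_S_eq G h f g x (hx WalkingParallelPair.zero))
  haveI h1 : PreservesLimitsOfShape (Discrete.{0} PEmpty) (H G h) :=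
    ⟨fun {K} => by
      haveI := hterm
      exact preservesLimit_of_iso_diagram (H G h) ((Functor.empty.{0} C).emptyExt K)⟩
  haveI h2 : PreservesLimitsOfShape (Discrete WalkingPair) (H G h) :=
    ⟨fun {K} => by
      haveI := hpair (K.obj ⟨WalkingPair.left⟩) (K.obj ⟨WalkingPair.right⟩)
      exact preservesLimit_of_iso_diagram (H G h) (diagramIsoPair K).symm⟩
  haveI h3 : PreservesLimitsOfShape WalkingParallelPair (H G h) :=
    ⟨fun {K} => by
      haveI := heq (K.map WalkingParallelPairHom.left) (K.map WalkingParallelPairHom.right)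
      exact preservesLimit_of_iso_diagram (H G h) (diagramIsoParallelPair K).symm⟩
  haveI h4 : PreservesFiniteProducts (H G h) :=
    PreservesFiniteProducts.of_preserves_binary_and_terminal (H G h)
  exact preservesFiniteLimits_of_preservesEqualizers_and_finiteProducts (H G h)

end Sub

section Small

variable {A : C ⥤ Type} (G : C ⥤ Type) [PreservesFiniteLimits G] (h : A ⟶ G)

/-- Choose a term evaluating to a given element of the closure. -/
noncomputable def toTm {c : C} (x : S G h c) : Tm A c := x.2.choose

lemma toTm_spec {c : C} (x : S G h c) : eval G h (toTm G h x) = some x.1 :=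
  x.2.choose_spec

/-- The resulting injection of the closure into the (small) type of all terms. -/
noncomputable def emb (c : C) (x : S G h c) : Σ c : C, Tm A c := ⟨c, toTm G h x⟩

lemma emb_inj (c : C) : Function.Injective (emb G h c) := by
  intro x y hxy
  apply Subtype.ext
  have h1 := toTm_spec G h x
  have h2 := toTm_spec G h y
  have : toTm G h x = toTm G h y := by
    have := (Sigma.mk.inj_iff.mp hxy).2
    exact eq_of_heq this
  rw [this, h2] at h1
  exact (Option.some.inj h1).symm

end Small

/-- A presheaf structure on subsets of the small type of terms. -/
structure SmallP (A : C ⥤ Type) : Type where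
  carrier : C → Set (Σ c : C, Tm A c)
  map : ∀ {c c' : C}, (c ⟶ c') → carrier c → carrier c'
  map_id : ∀ (c : C) (x : carrier c), map (𝟙 c) x = x
  map_comp : ∀ {c c' c'' : C} (f : c ⟶ c') (g : c' ⟶ c'') (x : carrier c),
    map (f ≫ g) x = map g (map f x)

/-- The presheaf associated to a `SmallP`. -/
def SmallP.toFunctor {A : C ⥤ Type} (P : SmallP A) : C ⥤ Type where
  obj c := P.carrier c
  map f := TypeCat.ofHom (P.map f)
  map_id c := ConcreteCategory.hom_ext _ _ (P.map_id c)
  map_comp f g := ConcreteCategory.hom_ext _ _ (P.map_comp f g)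

theorem solutionSet :
    SolutionSetCondition.{0}
      (ObjectProperty.ι (fun F : C ⥤ Type => PreservesFiniteLimits F)) := by
  intro A
  refine ⟨Σ' (P : SmallP A) (_ : PreservesFiniteLimits P.toFunctor), (A ⟶ P.toFunctor),
    fun i => ⟨i.1.toFunctor, i.2.1⟩, fun i => i.2.2, ?_⟩
  intro X φ
  haveI : PreservesFiniteLimits X.obj := X.property
  -- `φ : A ⟶ X.obj`
  let G := X.obj
  let q : ∀ c : C, (S G φ c : Type) ≃ Set.range (emb G φ c) := fun c =>
    Equiv.ofInjective _ (emb_inj G φ c)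
  let P : SmallP A :=
    { carrier := fun c => Set.range (emb G φ c)
      map := fun {c c'} f x => q c' ((H G φ).map f ((q c).symm x))
      map_id := by
        intro c x
        show q c ((H G φ).map (𝟙 c) ((q c).symm x)) = x
        have : (H G φ).map (𝟙 c) ((q c).symm x) = (q c).symm x :=
          types_congr_hom ((H G φ).map_id c) ((q c).symm x)
        rw [this]
        simp
      map_comp := by
        intro c c' c'' f g x
        show q c'' ((H G φ).map (f ≫ g) ((q c).symm x))
          = q c'' ((H G φ).map g ((q c').symm (q c' ((H G φ).map f ((q c).symm x)))))
        have : (H G φ).map (f ≫ g) ((q c).symm x)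
            = (H G φ).map g ((H G φ).map f ((q c).symm x)) :=
          types_congr_hom ((H G φ).map_comp f g) ((q c).symm x)
        rw [this]
        exact (congrArg (fun z => q c'' ((H G φ).map g z)) ((q c').symm_apply_apply _)).symm }
  let iso : P.toFunctor ≅ H G φ :=
    NatIso.ofComponents (fun c => ((q c).symm).toIso) (by
      intro c c' f
      ext x
      show (q c').symm (q c' ((H G φ).map f ((q c).symm x))) = (H G φ).map f ((q c).symm x)
      exact (q c').symm_apply_apply _)
  haveI : PreservesFiniteLimits (H G φ) := H_lex G φ
  haveI hP : PreservesFiniteLimits P.toFunctor := preservesFiniteLimits_of_natIso iso.symm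
  refine ⟨⟨P, hP, θ G φ ≫ iso.inv⟩, ObjectProperty.homMk (show P.toFunctor ⟶ X.obj from iso.hom ≫ ν G φ), ?_⟩
  show (θ G φ ≫ iso.inv) ≫ (iso.hom ≫ ν G φ) = φ
  rw [Category.assoc, Iso.inv_hom_id_assoc, θν]

theorem main (C : Type) [SmallCategory C] [HasFiniteLimits C] :
    HasLimits (ObjectProperty.FullSubcategory (fun F : C ⥤ Type => PreservesFiniteLimits F)) ∧
      HasColimits (ObjectProperty.FullSubcategory (fun F : C ⥤ Type => PreservesFiniteLimits F)) := by
  have hlim : HasLimits (ObjectProperty.FullSubcategory (fun F : C ⥤ Type => PreservesFiniteLimits F)) :=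
    { has_limits_of_shape := fun J _ =>
        by haveI := closedUnderLimits (C := C) J; infer_instance }
  refine ⟨hlim, ?_⟩
  haveI := hlim
  haveI : PreservesLimits
      (ObjectProperty.ι (fun F : C ⥤ Type => PreservesFiniteLimits F)) := by
    constructor
    intro J _
    haveI := closedUnderLimits (C := C) J
    constructor
    intro K
    infer_instance
  haveI : (ObjectProperty.ι
      (fun F : C ⥤ Type => PreservesFiniteLimits F)).IsRightAdjoint :=
    isRightAdjoint_of_preservesLimits_of_solutionSetCondition _ solutionSet
  haveI : Reflective
      (ObjectProperty.ι (fun F : C ⥤ Type => PreservesFiniteLimits F)) :=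
    { L := (ObjectProperty.ι _).leftAdjoint
      adj := Adjunction.ofIsRightAdjoint _ }
  exact hasColimits_of_reflective
    (ObjectProperty.ι (fun F : C ⥤ Type => PreservesFiniteLimits F))

end LexProp1


/-- `L = Lex(C, Type)` is complete and cocomplete (Proposition 1(1)). -/
theorem lex_hasLimits_hasColimits (C : Type) [SmallCategory C] [HasFiniteLimits C] :
    HasLimits (ObjectProperty.FullSubcategory (fun F : C ⥤ Type => PreservesFiniteLimits F)) ∧
      HasColimits (ObjectProperty.FullSubcategory (fun F : C ⥤ Type => PreservesFiniteLimits F)) := by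
  exact LexProp1.main C
end

section
/- Let C be a small category with finite limits and let L be the full subcategory of C ⥤ Type on the left exact presheaves. The functor Y : C ⥤ Lᵒᵖ sending an object c to the representable presheaf C(c, -) (regarded as an object of L) preserves finite limits, and it preserves all colimits that exist in C. -/
open CategoryTheory CategoryTheory.Limits Opposite

/-- The category of left exact presheaves on `C`. -/
abbrev LexPSh (C : Type) [SmallCategory C] : Type 1 :=
  ObjectProperty.FullSubcategory (fun F : C ⥤ Type => PreservesFiniteLimits F)

/-- The representable presheaf `C(c, -)` as an object of `LexPSh C`. -/
def lexRepr (C : Type) [SmallCategory C] (c : C) : LexPSh C :=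
  ⟨coyoneda.obj (op c), inferInstance⟩

/-- The Yoneda embedding `Y : C ⥤ Lᵒᵖ`, `c ↦ C(c, -)`. -/
def yonedaLex (C : Type) [SmallCategory C] : C ⥤ (LexPSh C)ᵒᵖ where
  obj c := op (lexRepr C c)
  map {c d} f := (show lexRepr C d ⟶ lexRepr C c from ObjectProperty.homMk (coyoneda.map f.op)).op
  map_id c := by
    apply Quiver.Hom.unop_inj
    simp [lexRepr]
    rfl
  map_comp {c d e} f g := by
    apply Quiver.Hom.unop_inj
    simp [lexRepr]
    rfl

/-- `yonedaLex` followed by the (opposite of the) inclusion is `coyoneda.rightOp`. -/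
lemma yonedaLex_comp_inclusion (C : Type) [SmallCategory C] :
    yonedaLex C ⋙ (ObjectProperty.ι
      (fun F : C ⥤ Type => PreservesFiniteLimits F)).op = coyoneda.rightOp := rfl

/-- The composite `yonedaLex C ⋙ coyoneda.obj X` is isomorphic to the presheaf underlying
`X`, for any `X`. -/
noncomputable def yonedaLexCompCoyoneda (C : Type) [SmallCategory C]
    (X : ((LexPSh C)ᵒᵖ)ᵒᵖ) :
    yonedaLex C ⋙ coyoneda.obj X ≅ X.unop.unop.obj :=
  NatIso.ofComponents
    (fun c => Equiv.toIso
      (show ((X.unop ⟶ op (lexRepr C c)) ≃ X.unop.unop.obj.obj c) from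
        (Quiver.Hom.opEquiv.symm.trans ((ObjectProperty.fullyFaithfulι _).homEquiv.trans
          (coyonedaEquiv (F := X.unop.unop.obj))))))
    (fun {c d} f => by
      ext g
      exact (coyonedaEquiv_naturality g.unop.hom f).symm)

/-- Proposition 1(2): `Y : C ⥤ Lᵒᵖ` preserves finite limits and all colimits existing in `C`. -/
theorem yonedaLex_preservesFiniteLimits_and_colimits
    (C : Type) [SmallCategory C] [HasFiniteLimits C] :
    PreservesFiniteLimits (yonedaLex C) ∧
      ∀ (J : Type) [SmallCategory J] (K : J ⥤ C) [HasColimit K],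
        PreservesColimit K (yonedaLex C) := by
  constructor
  · constructor
    intro J _ _
    constructor
    intro K
    constructor
    intro c hc
    constructor
    apply coyonedaJointlyReflectsLimits
    intro X
    have : PreservesLimit K X.unop.unop.obj := X.unop.unop.2.preservesFiniteLimits J |>.preservesLimit
    have : PreservesLimit K (yonedaLex C ⋙ coyoneda.obj X) :=
      preservesLimit_of_natIso K (yonedaLexCompCoyoneda C X).symm
    exact isLimitOfPreserves (yonedaLex C ⋙ coyoneda.obj X) hc
  · intro J _ K _
    have h1 : PreservesColimit K (coyoneda.rightOp : C ⥤ (C ⥤ Type)ᵒᵖ) :=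
      preservesColimit_rightOp K coyoneda
    have h2 : PreservesColimit K (yonedaLex C ⋙ (ObjectProperty.ι
        (fun F : C ⥤ Type => PreservesFiniteLimits F)).op) := by
      rw [yonedaLex_comp_inclusion]; exact h1
    exact preservesColimit_of_reflects_of_preserves (yonedaLex C)
      (ObjectProperty.ι _).op
end

section
/- Let C be a small category with finite limits and let L be the full subcategory of C ⥤ Type on the left exact presheaves. For every filtered small category I, the colimit functor (I ⥤ L) ⥤ L preserves finite limits (filtered colimits commute with finite limits in L). -/
open CategoryTheory CategoryTheory.Limits

section Aux

variable (C : Type) [SmallCategory C] (I : Type) [SmallCategory I] [IsFiltered I]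

/-- The colimit functor on `I ⥤ (C ⥤ Type)` preserves finite limits when `I` is filtered. -/
noncomputable instance colim_psh_preservesFiniteLimits :
    PreservesFiniteLimits (colim : (I ⥤ (C ⥤ Type)) ⥤ (C ⥤ Type)) := by
  constructor
  intro J _ _
  haveI : PreservesLimitsOfShape J (colim : (I ⥤ Type) ⥤ Type) :=
    (inferInstance : PreservesFiniteLimits (colim : (I ⥤ Type) ⥤ Type)).preservesFiniteLimits J
  infer_instance

/-- A filtered colimit of left exact presheaves is left exact. -/
theorem lexClosedUnderColimits :
    ObjectProperty.IsClosedUnderColimitsOfShape (fun F : C ⥤ Type => PreservesFiniteLimits F) I := by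
  suffices H : ∀ (D : I ⥤ (C ⥤ Type)) (c : Cocone D) (_ : IsColimit c)
      (_ : ∀ i, PreservesFiniteLimits (D.obj i)), PreservesFiniteLimits c.pt from
    ⟨fun _ ⟨p⟩ => H p.diag _ p.isColimit p.prop_diag_obj⟩
  intro D c hc hobj
  haveI : ∀ i, PreservesFiniteLimits (D.obj i) := hobj
  haveI : PreservesFiniteLimits D.flip := by
    apply preservesFiniteLimits_of_evaluation
    intro i
    exact preservesFiniteLimits_of_natIso (flipCompEvaluation D i).symm
  haveI : PreservesFiniteLimits (D.flip ⋙ (colim : (I ⥤ Type) ⥤ Type)) :=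
    comp_preservesFiniteLimits _ _
  have e : c.pt ≅ D.flip ⋙ (colim : (I ⥤ Type) ⥤ Type) :=
    (hc.coconePointUniqueUpToIso (colimit.isColimit D)) ≪≫ colimitIsoFlipCompColim D
  exact preservesFiniteLimits_of_natIso e.symm

/-- A finite limit of left exact presheaves is left exact. -/
theorem lexClosedUnderLimits (J : Type) [SmallCategory J] [FinCategory J] :
    ObjectProperty.IsClosedUnderLimitsOfShape (fun F : C ⥤ Type => PreservesFiniteLimits F) J := by
  suffices H : ∀ (D : J ⥤ (C ⥤ Type)) (c : Cone D) (_ : IsLimit c)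
      (_ : ∀ j, PreservesFiniteLimits (D.obj j)), PreservesFiniteLimits c.pt from
    ⟨fun _ ⟨p⟩ => H p.diag _ p.isLimit p.prop_diag_obj⟩
  intro D c hc hobj
  haveI : ∀ j, PreservesFiniteLimits (D.obj j) := hobj
  haveI : PreservesFiniteLimits D.flip := by
    apply preservesFiniteLimits_of_evaluation
    intro j
    exact preservesFiniteLimits_of_natIso (flipCompEvaluation D j).symm
  haveI : PreservesFiniteLimits (lim : (J ⥤ Type) ⥤ Type) := by
    constructor
    intro J' _ _
    infer_instance
  haveI : PreservesFiniteLimits (D.flip ⋙ (lim : (J ⥤ Type) ⥤ Type)) :=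
    comp_preservesFiniteLimits _ _
  have e : c.pt ≅ D.flip ⋙ (lim : (J ⥤ Type) ⥤ Type) :=
    (hc.conePointUniqueUpToIso (limit.isLimit D)) ≪≫ limitIsoFlipCompLim D
  exact preservesFiniteLimits_of_natIso e.symm

end Aux

/-- Proposition 1(3): filtered colimits exist in `L` and commute with finite limits. -/
theorem lex_filtered_colim_preservesFiniteLimits
    (C : Type) [SmallCategory C] [HasFiniteLimits C]
    (I : Type) [SmallCategory I] [IsFiltered I] :
    ∃ h : HasColimitsOfShape I (LexPSh C),
      PreservesFiniteLimits (@colim I _ (LexPSh C) _ h) := by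
  haveI h : HasColimitsOfShape I (LexPSh C) :=
    by haveI := lexClosedUnderColimits C I; exact hasColimitsOfShape_of_closedUnderColimits _ _
  refine ⟨h, ?_⟩
  constructor
  intro J _ _
  -- the inclusion creates colimits of shape `I` and limits of shape `J`
  haveI : CreatesColimitsOfShape I
      (ObjectProperty.ι (fun F : C ⥤ Type => PreservesFiniteLimits F)) :=
    by haveI := lexClosedUnderColimits C I; infer_instance
  haveI : CreatesLimitsOfShape J
      (ObjectProperty.ι (fun F : C ⥤ Type => PreservesFiniteLimits F)) :=
    by haveI := lexClosedUnderLimits C J; infer_instance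
  set ι := ObjectProperty.ι (fun F : C ⥤ Type => PreservesFiniteLimits F) with hι
  haveI : PreservesLimitsOfShape J (colim : (I ⥤ (C ⥤ Type)) ⥤ (C ⥤ Type)) :=
    (colim_psh_preservesFiniteLimits C I).preservesFiniteLimits J
  haveI : PreservesLimitsOfShape J ι := inferInstance
  haveI : PreservesColimitsOfShape I ι := inferInstance
  haveI : HasLimitsOfShape J (LexPSh C) :=
    by haveI := lexClosedUnderLimits C J; exact hasLimitsOfShape_of_closedUnderLimits _ _
  haveI : PreservesLimitsOfShape J ((Functor.whiskeringRight I (LexPSh C) (C ⥤ Type)).obj ι) :=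
    inferInstance
  haveI : PreservesLimitsOfShape J
      ((Functor.whiskeringRight I (LexPSh C) (C ⥤ Type)).obj ι ⋙ colim) :=
    comp_preservesLimitsOfShape _ _
  haveI : PreservesLimitsOfShape J ((colim : (I ⥤ LexPSh C) ⥤ LexPSh C) ⋙ ι) :=
    preservesLimitsOfShape_of_natIso (preservesColimitNatIso ι).symm
  exact preservesLimitsOfShape_of_reflects_of_preserves _ ι
end

section
/- Let C be a small category with finite limits and let L be the full subcategory of C ⥤ Type on the left exact presheaves. Let I be a filtered small category, let F, G : I ⥤ L be diagrams and let m : F ⟶ G be a natural transformation each of whose components m_i is a regular monomorphism in L. Then the induced morphism colim F ⟶ colim G on filtered colimits is a regular monomorphism in L. -/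
open CategoryTheory CategoryTheory.Limits

namespace LexProof
section Closed
variable (C : Type) [SmallCategory C]




theorem closedUnderLimits (J : Type) [SmallCategory J] :
    ObjectProperty.IsClosedUnderLimitsOfShape (fun F : C ⥤ Type => PreservesFiniteLimits F) J := by
  refine ⟨fun X ⟨h⟩ => ?_⟩
  obtain ⟨⟨D, π, hc⟩, hD⟩ := h
  let c : Cone D := Cone.mk _ π
  haveI : ∀ j, PreservesFiniteLimits (D.obj j) := hD
  haveI : PreservesFiniteLimits (lim : (J ⥤ Type) ⥤ Type) := by
    haveI : PreservesLimitsOfSize.{0, 0} (lim : (J ⥤ Type) ⥤ Type) :=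
      constLimAdj.rightAdjoint_preservesLimits
    apply preservesFiniteLimits_of_preservesFiniteLimitsOfSize.{0}
    intro J' _ _
    infer_instance
  haveI : PreservesFiniteLimits D.flip := by
    apply preservesFiniteLimits_of_evaluation
    intro j
    exact preservesFiniteLimits_of_natIso (flipCompEvaluation D j).symm
  haveI : PreservesFiniteLimits (D.flip ⋙ lim) := comp_preservesFiniteLimits _ _
  haveI : PreservesFiniteLimits (limit D) :=
    preservesFiniteLimits_of_natIso (limitIsoFlipCompLim D).symm
  exact preservesFiniteLimits_of_natIso
    (show limit D ≅ c.pt from IsLimit.conePointUniqueUpToIso (limit.isLimit D) hc)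

theorem closedUnderColimits (I : Type) [SmallCategory I] [IsFiltered I] :
    ObjectProperty.IsClosedUnderColimitsOfShape (fun F : C ⥤ Type => PreservesFiniteLimits F) I := by
  refine ⟨fun X ⟨h⟩ => ?_⟩
  obtain ⟨⟨D, ι, hc⟩, hD⟩ := h
  let c : Cocone D := Cocone.mk _ ι
  haveI : ∀ i, PreservesFiniteLimits (D.obj i) := hD
  haveI : PreservesFiniteLimits D.flip := by
    apply preservesFiniteLimits_of_evaluation
    intro i
    exact preservesFiniteLimits_of_natIso (flipCompEvaluation D i).symm
  haveI : PreservesFiniteLimits (D.flip ⋙ colim) := comp_preservesFiniteLimits _ _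
  haveI : PreservesFiniteLimits (colimit D) :=
    preservesFiniteLimits_of_natIso (colimitIsoFlipCompColim D).symm
  exact preservesFiniteLimits_of_natIso
    (show colimit D ≅ c.pt from IsColimit.coconePointUniqueUpToIso (colimit.isColimit D) hc)


end Closed
section Inst


variable (C : Type) [SmallCategory C]

/-- The inclusion functor. -/
abbrev ι : LexPSh C ⥤ (C ⥤ Type) :=
  ObjectProperty.ι (fun F : C ⥤ Type => PreservesFiniteLimits F)

instance (J : Type) [SmallCategory J] : HasLimitsOfShape J (LexPSh C) :=
  haveI := closedUnderLimits C J; inferInstance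

noncomputable instance : CreatesLimitsOfSize.{0,0} (ι C) :=
  ⟨fun {J} _ => haveI := closedUnderLimits C J; inferInstance⟩

variable (I : Type) [SmallCategory I] [IsFiltered I]

instance : HasColimitsOfShape I (LexPSh C) :=
  haveI := closedUnderColimits C I; inferInstance

noncomputable instance : CreatesColimitsOfShape I (ι C) :=
  haveI := closedUnderColimits C I; inferInstance

instance : PreservesFiniteLimits (colim : (I ⥤ C ⥤ Type) ⥤ (C ⥤ Type)) := by
  apply preservesFiniteLimits_of_evaluation
  intro c
  have e := preservesColimitNatIso (J := I) ((evaluation C Type).obj c)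
  haveI : PreservesFiniteLimits
      ((Functor.whiskeringRight I (C ⥤ Type) Type).obj ((evaluation C Type).obj c)) := by
    apply preservesFiniteLimits_of_preservesFiniteLimitsOfSize.{0}
    intro J' _ _; infer_instance
  haveI := comp_preservesFiniteLimits
    ((Functor.whiskeringRight I (C ⥤ Type) Type).obj ((evaluation C Type).obj c))
    (colim : (I ⥤ Type) ⥤ Type)
  exact preservesFiniteLimits_of_natIso e.symm

instance : PreservesFiniteLimits (colim : (I ⥤ LexPSh C) ⥤ LexPSh C) := by
  haveI : PreservesFiniteLimits ((colim : (I ⥤ LexPSh C) ⥤ _) ⋙ ι C) := by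
    have e := preservesColimitNatIso (J := I) (ι C)
    haveI : PreservesFiniteLimits ((Functor.whiskeringRight I (LexPSh C) (C ⥤ Type)).obj (ι C)) := by
      apply preservesFiniteLimits_of_preservesFiniteLimitsOfSize.{0}
      intro J' _ _; infer_instance
    haveI := comp_preservesFiniteLimits
      ((Functor.whiskeringRight I (LexPSh C) (C ⥤ Type)).obj (ι C))
      (colim : (I ⥤ C ⥤ Type) ⥤ (C ⥤ Type))
    exact preservesFiniteLimits_of_natIso e.symm
  exact preservesFiniteLimits_of_reflects_of_preserves _ (ι C)


end Inst


section SubFSec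
variable {C : Type} [SmallCategory C] [HasFiniteLimits C]

/-- The closure of the images of two natural transformations `u v : B ⟶ H` under the
finite-limit operations of `H`. -/
inductive Cl {B H : C ⥤ Type} (u v : B ⟶ H) : ∀ c : C, H.obj c → Prop
  | ofU {c : C} (b : B.obj c) : Cl u v c (u.app c b)
  | ofV {c : C} (b : B.obj c) : Cl u v c (v.app c b)
  | push {c d : C} (f : c ⟶ d) {x : H.obj c} : Cl u v c x → Cl u v d (H.map f x)
  | top (w : H.obj (⊤_ C)) : Cl u v (⊤_ C) w
  | pull {X Y Z : C} (f : X ⟶ Z) (g : Y ⟶ Z) (w : H.obj (pullback f g)) :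
      Cl u v X (H.map (pullback.fst f g) w) → Cl u v Y (H.map (pullback.snd f g) w) →
      Cl u v (pullback f g) w


theorem pullback_elem_ext {X Y Z : Type} {f : X ⟶ Z} {g : Y ⟶ Z} {p q : pullback f g}
    (h1 : pullback.fst f g p = pullback.fst f g q)
    (h2 : pullback.snd f g p = pullback.snd f g q) : p = q := by
  apply (Types.pullbackIsoPullback f g).toEquiv.injective
  show (Types.pullbackIsoPullback f g).hom p = (Types.pullbackIsoPullback f g).hom q
  apply Subtype.ext
  apply Prod.ext
  · show ((Types.pullbackIsoPullback f g).hom p : X × Y).1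
        = ((Types.pullbackIsoPullback f g).hom q : X × Y).1
    rw [Types.pullbackIsoPullback_hom_fst, Types.pullbackIsoPullback_hom_fst, h1]
  · show ((Types.pullbackIsoPullback f g).hom p : X × Y).2
        = ((Types.pullbackIsoPullback f g).hom q : X × Y).2
    rw [Types.pullbackIsoPullback_hom_snd, Types.pullbackIsoPullback_hom_snd, h2]


variable {B H : C ⥤ Type} (u v : B ⟶ H)

/-- The subfunctor of `H` spanned by the closure. -/
@[simps]
def SubF : C ⥤ Type where
  obj c := {x : H.obj c // Cl u v c x}
  map f := TypeCat.ofHom fun x => ⟨H.map f x.1, .push f x.2⟩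
  map_id c := by ext x; exact types_congr_hom (H.map_id c) x.1
  map_comp f g := by ext x; exact types_congr_hom (H.map_comp f g) x.1

/-- Inclusion of the subfunctor. -/
@[simps]
def SubF.inc : SubF u v ⟶ H where
  app c := TypeCat.ofHom fun x => x.1

/-- Corestriction of `u`. -/
@[simps]
def SubF.coreU : B ⟶ SubF u v where
  app c := TypeCat.ofHom fun b => ⟨u.app c b, .ofU b⟩
  naturality c d f := by
    ext b
    exact Subtype.ext (types_congr_hom (u.naturality f) b)

/-- Corestriction of `v`. -/
@[simps]
def SubF.coreV : B ⟶ SubF u v where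
  app c := TypeCat.ofHom fun b => ⟨v.app c b, .ofV b⟩
  naturality c d f := by
    ext b
    exact Subtype.ext (types_congr_hom (v.naturality f) b)

theorem SubF.coreU_inc : SubF.coreU u v ≫ SubF.inc u v = u := by
  ext c b; rfl

theorem SubF.coreV_inc : SubF.coreV u v ≫ SubF.inc u v = v := by
  ext c b; rfl

variable [PreservesFiniteLimits H]

noncomputable instance : PreservesFiniteLimits (SubF u v) := by
  have hterm : PreservesLimit (Functor.empty.{0} C) (SubF u v) := by
    have e : H.obj (⊤_ C) ≃ PUnit :=
      ((PreservesTerminal.iso H) ≪≫ Types.terminalIso).toEquiv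
    haveI : Subsingleton (H.obj (⊤_ C)) := e.subsingleton
    haveI : Subsingleton ((SubF u v).obj (⊤_ C)) :=
      ⟨fun a b => Subtype.ext (Subsingleton.elim a.1 b.1)⟩
    have hne : Nonempty ((SubF u v).obj (⊤_ C)) := ⟨⟨e.symm PUnit.unit, .top _⟩⟩
    haveI : IsIso (terminal.from ((SubF u v).obj (⊤_ C))) := by
      rw [isIso_iff_bijective]
      have e' : (⊤_ Type) ≃ PUnit := Types.terminalIso.toEquiv
      haveI : Subsingleton (⊤_ Type) := e'.subsingleton
      exact ⟨fun a b _ => Subsingleton.elim a b,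
        fun y => ⟨hne.some, Subsingleton.elim _ _⟩⟩
    exact preservesTerminal_of_isIso _ (terminal.from _)
  have hpb : ∀ {X Y Z : C} (f : X ⟶ Z) (g : Y ⟶ Z),
      PreservesLimit (cospan f g) (SubF u v) := by
    intro X Y Z f g
    have hfst : ∀ (w : (SubF u v).obj (pullback f g)),
        pullback.fst ((SubF u v).map f) ((SubF u v).map g)
          (pullbackComparison (SubF u v) f g w)
          = (SubF u v).map (pullback.fst f g) w := fun w =>
      types_congr_hom (pullbackComparison_comp_fst (SubF u v) f g) w
    have hsnd : ∀ (w : (SubF u v).obj (pullback f g)),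
        pullback.snd ((SubF u v).map f) ((SubF u v).map g)
          (pullbackComparison (SubF u v) f g w)
          = (SubF u v).map (pullback.snd f g) w := fun w =>
      types_congr_hom (pullbackComparison_comp_snd (SubF u v) f g) w
    have hHfst : ∀ (w : H.obj (pullback f g)),
        pullback.fst (H.map f) (H.map g) (pullbackComparison H f g w)
          = H.map (pullback.fst f g) w := fun w =>
      types_congr_hom (pullbackComparison_comp_fst H f g) w
    have hHsnd : ∀ (w : H.obj (pullback f g)),
        pullback.snd (H.map f) (H.map g) (pullbackComparison H f g w)
          = H.map (pullback.snd f g) w := fun w =>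
      types_congr_hom (pullbackComparison_comp_snd H f g) w
    have hHbij : Function.Bijective (pullbackComparison H f g) :=
      (isIso_iff_bijective _).1 inferInstance
    have hbij : Function.Bijective (pullbackComparison (SubF u v) f g) := by
      constructor
      · intro a b hab
        apply Subtype.ext
        apply hHbij.1
        apply pullback_elem_ext
        · rw [hHfst, hHfst]
          have := congrArg (pullback.fst ((SubF u v).map f) ((SubF u v).map g)) hab
          rw [hfst, hfst] at this
          exact congrArg Subtype.val this
        · rw [hHsnd, hHsnd]
          have := congrArg (pullback.snd ((SubF u v).map f) ((SubF u v).map g)) hab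
          rw [hsnd, hsnd] at this
          exact congrArg Subtype.val this
      · intro p
        set pa := pullback.fst ((SubF u v).map f) ((SubF u v).map g) p with hpa
        set pb := pullback.snd ((SubF u v).map f) ((SubF u v).map g) p with hpb'
        have hcond : (SubF u v).map f pa = (SubF u v).map g pb :=
          types_congr_hom (pullback.condition (f := (SubF u v).map f) (g := (SubF u v).map g)) p
        have hcond' : H.map f pa.1 = H.map g pb.1 := congrArg Subtype.val hcond
        set hw : pullback (H.map f) (H.map g) :=
          (Types.pullbackIsoPullback (H.map f) (H.map g)).inv ⟨(pa.1, pb.1), hcond'⟩ with hhw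
        set w : H.obj (pullback f g) := inv (pullbackComparison H f g) hw with hwdef
        have hcw : pullbackComparison H f g w = hw := by
          rw [hwdef]
          exact types_congr_hom (IsIso.inv_hom_id (pullbackComparison H f g)) hw
        have h1 : H.map (pullback.fst f g) w = pa.1 := by
          rw [← hHfst, hcw, hhw]
          exact Types.pullbackIsoPullback_inv_fst_apply (H.map f) (H.map g) _
        have h2 : H.map (pullback.snd f g) w = pb.1 := by
          rw [← hHsnd, hcw, hhw]
          exact Types.pullbackIsoPullback_inv_snd_apply (H.map f) (H.map g) _
        refine ⟨⟨w, .pull f g w ?_ ?_⟩, ?_⟩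
        · rw [h1]; exact pa.2
        · rw [h2]; exact pb.2
        · apply pullback_elem_ext
          · exact (hfst _).trans (Subtype.ext h1)
          · exact (hsnd _).trans (Subtype.ext h2)
    haveI : IsIso (pullbackComparison (SubF u v) f g) := (isIso_iff_bijective _).2 hbij
    exact PreservesPullback.of_iso_comparison _
  haveI : PreservesLimitsOfShape (Discrete PEmpty.{1}) (SubF u v) :=
    preservesLimitsOfShape_pempty_of_preservesTerminal _
  haveI : PreservesLimitsOfShape WalkingCospan (SubF u v) := by
    constructor
    intro K
    haveI := hpb (K.map WalkingCospan.Hom.inl) (K.map WalkingCospan.Hom.inr)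
    exact preservesLimit_of_iso_diagram _ (diagramIsoCospan K).symm
  exact preservesFiniteLimits_of_preservesTerminal_and_pullbacks _


end SubFSec

section Main

variable {C : Type} [SmallCategory C] [HasFiniteLimits C]
variable {I : Type} [SmallCategory I] [IsFiltered I]
variable (F G : I ⥤ LexPSh C) (m : F ⟶ G)
variable (R : ∀ i : I, RegularMono (m.app i))

/-- The small lex subfunctor of the regular-mono witness object at stage `j`. -/
noncomputable def ZF (j : I) : LexPSh C :=
  ⟨SubF (B := (G.obj j).obj) (H := ((R j).Z).obj) (R j).left.hom (R j).right.hom, by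
    haveI : PreservesFiniteLimits ((R j).Z).obj := ((R j).Z).property
    infer_instance⟩

/-- Index set for the product at stage `i`. -/
abbrev Sdx (i : I) : Type :=
  Σ j : I, {uv : (G.obj i ⟶ ZF F G m R j) × (G.obj i ⟶ ZF F G m R j) //
    m.app i ≫ uv.1 = m.app i ≫ uv.2}

noncomputable abbrev Wobj (i : I) : LexPSh C :=
  ∏ᶜ fun s : Sdx F G m R i => ZF F G m R s.1

/-- Reindexing. -/
noncomputable def ρ {i i' : I} (α : i ⟶ i') (s : Sdx F G m R i') : Sdx F G m R i :=
  ⟨s.1, ⟨(G.map α ≫ s.2.1.1, G.map α ≫ s.2.1.2), by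
    simp only [← Category.assoc]
    rw [← m.naturality α]
    simp only [Category.assoc]
    rw [s.2.2]⟩⟩

lemma π_heq (i : I) {s t : Sdx F G m R i} (h : s = t) :
    HEq (Pi.π (fun s : Sdx F G m R i => ZF F G m R s.1) s)
      (Pi.π (fun s : Sdx F G m R i => ZF F G m R s.1) t) := by rw [h]

lemma ρ_id (i : I) (s : Sdx F G m R i) : ρ F G m R (𝟙 i) s = s := by
  obtain ⟨j, ⟨⟨u, v⟩, h⟩⟩ := s
  simp only [ρ, CategoryTheory.Functor.map_id, Category.id_comp]

lemma ρ_comp {i i' i'' : I} (α : i ⟶ i') (β : i' ⟶ i'') (s : Sdx F G m R i'') :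
    ρ F G m R (α ≫ β) s = ρ F G m R α (ρ F G m R β s) := by
  obtain ⟨j, ⟨⟨u, v⟩, h⟩⟩ := s
  simp only [ρ, Functor.map_comp, Category.assoc]

noncomputable abbrev W : I ⥤ LexPSh C where
  obj i := Wobj F G m R i
  map {i i'} α := Pi.lift fun s : Sdx F G m R i' => Pi.π _ (ρ F G m R α s)
  map_id i := by
    apply Pi.hom_ext
    intro s
    erw [Pi.lift_π, Category.id_comp]
    exact eq_of_heq (π_heq F G m R i (ρ_id F G m R i s))
  map_comp {i i' i''} α β := by
    apply Pi.hom_ext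
    intro s
    simp only [Pi.lift_π, Category.assoc]
    erw [Pi.lift_π, Pi.lift_π, Pi.lift_π]
    exact eq_of_heq (π_heq F G m R i (ρ_comp F G m R α β s))

noncomputable def pN : G ⟶ W F G m R where
  app i := Pi.lift fun s : Sdx F G m R i => s.2.1.1
  naturality i i' α := by
    apply Pi.hom_ext
    intro s
    simp [W, ρ]

noncomputable def qN : G ⟶ W F G m R where
  app i := Pi.lift fun s : Sdx F G m R i => s.2.1.2
  naturality i i' α := by
    apply Pi.hom_ext
    intro s
    simp [W, ρ]

lemma wapp (i : I) :
    m.app i ≫ (pN F G m R).app i = m.app i ≫ (qN F G m R).app i := by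
  apply Pi.hom_ext
  intro s
  simp [pN, qN]
  exact s.2.2

/-- L-level corestrictions and inclusion. -/
noncomputable def coreUL (i : I) : G.obj i ⟶ ZF F G m R i :=
  haveI : PreservesFiniteLimits ((R i).Z).obj := ((R i).Z).property
  ⟨SubF.coreU (R i).left.hom (R i).right.hom⟩

noncomputable def coreVL (i : I) : G.obj i ⟶ ZF F G m R i :=
  haveI : PreservesFiniteLimits ((R i).Z).obj := ((R i).Z).property
  ⟨SubF.coreV (R i).left.hom (R i).right.hom⟩

noncomputable def incL (i : I) : ZF F G m R i ⟶ (R i).Z :=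
  haveI : PreservesFiniteLimits ((R i).Z).obj := ((R i).Z).property
  ⟨SubF.inc (R i).left.hom (R i).right.hom⟩

lemma coreUL_incL (i : I) : coreUL F G m R i ≫ incL F G m R i = (R i).left :=
  ObjectProperty.hom_ext _ (SubF.coreU_inc (R i).left.hom (R i).right.hom)

lemma coreVL_incL (i : I) : coreVL F G m R i ≫ incL F G m R i = (R i).right :=
  ObjectProperty.hom_ext _ (SubF.coreV_inc (R i).left.hom (R i).right.hom)

/-- The distinguished index: corestrictions of the regular-mono witness pair. -/
noncomputable def sstar (i : I) : Sdx F G m R i := by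
  refine ⟨i, ⟨(coreUL F G m R i, coreVL F G m R i), ?_⟩⟩
  apply ObjectProperty.hom_ext
  apply NatTrans.ext
  funext c
  ext b
  apply Subtype.ext
  exact types_congr_hom (NatTrans.congr_app (congrArg InducedCategory.Hom.hom (R i).w) c) b

lemma sstar_compat (i : I) {X : LexPSh C} (t : X ⟶ G.obj i)
    (h : t ≫ coreUL F G m R i = t ≫ coreVL F G m R i) :
    t ≫ (R i).left = t ≫ (R i).right := by
  have h2 := congrArg (fun w => w ≫ incL F G m R i) h
  simpa only [Category.assoc, coreUL_incL, coreVL_incL] using h2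

noncomputable def forkLim (i : I) :
    IsLimit (Fork.ofι (m.app i) (wapp F G m R i)) :=
  Fork.IsLimit.mk' _ fun s => by
    haveI := (R i).mono
    have hs : s.ι ≫ (pN F G m R).app i = s.ι ≫ (qN F G m R).app i := s.condition
    have h1 : s.ι ≫ ((pN F G m R).app i ≫ Pi.π _ (sstar F G m R i))
        = s.ι ≫ ((qN F G m R).app i ≫ Pi.π _ (sstar F G m R i)) := by
      rw [← Category.assoc, hs, Category.assoc]
    rw [show (pN F G m R).app i ≫ Pi.π _ (sstar F G m R i)
          = coreUL F G m R i from Pi.lift_π _ _,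
        show (qN F G m R).app i ≫ Pi.π _ (sstar F G m R i)
          = coreVL F G m R i from Pi.lift_π _ _] at h1
    have h2 := sstar_compat F G m R i s.ι h1
    obtain ⟨l, hl⟩ := Fork.IsLimit.lift' (R i).isLimit s.ι h2
    simp only [Fork.ι_ofι] at hl
    exact ⟨l, by simpa only [Fork.ι_ofι] using hl, fun {k} hk => by
      simp only [Fork.ι_ofι] at hk
      rw [← cancel_mono (m.app i), hl, hk]⟩


lemma wnat : m ≫ pN F G m R = m ≫ qN F G m R := by
  apply NatTrans.ext
  funext i
  simp only [NatTrans.comp_app]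
  exact wapp F G m R i

noncomputable def bigForkIsLimit : IsLimit (Fork.ofι m (wnat F G m R)) := by
  apply evaluationJointlyReflectsLimits
  intro i
  let d : parallelPair ((pN F G m R).app i) ((qN F G m R).app i)
      ≅ parallelPair (pN F G m R) (qN F G m R) ⋙ (evaluation I (LexPSh C)).obj i :=
    (diagramIsoParallelPair
      (parallelPair (pN F G m R) (qN F G m R) ⋙ (evaluation I (LexPSh C)).obj i)).symm
  refine (IsLimit.equivOfNatIsoOfIso d (Fork.ofι (m.app i) (wapp F G m R i)) _ ?_)
    (forkLim F G m R i)
  exact Cones.ext (Iso.refl _) (by rintro (_|_) <;> simp [d] <;> erw [Category.comp_id])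

lemma colim_w : colim.map m ≫ colim.map (pN F G m R)
    = colim.map m ≫ colim.map (qN F G m R) := by
  rw [← colim.map_comp, wnat F G m R, colim.map_comp]

noncomputable def colimForkIsLimit : IsLimit (Fork.ofι (colim.map m) (colim_w F G m R)) := by
  have h0 : IsLimit ((colim : (I ⥤ LexPSh C) ⥤ LexPSh C).mapCone
      (Fork.ofι m (wnat F G m R))) :=
    isLimitOfPreserves colim (bigForkIsLimit F G m R)
  let d : parallelPair (colim.map (pN F G m R)) (colim.map (qN F G m R))
      ≅ parallelPair (pN F G m R) (qN F G m R) ⋙ (colim : (I ⥤ LexPSh C) ⥤ LexPSh C) :=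
    (diagramIsoParallelPair
      (parallelPair (pN F G m R) (qN F G m R) ⋙ (colim : (I ⥤ LexPSh C) ⥤ LexPSh C))).symm
  exact (IsLimit.equivOfNatIsoOfIso d (Fork.ofι (colim.map m) (colim_w F G m R))
    (colim.mapCone (Fork.ofι m (wnat F G m R)))
    (Cones.ext (Iso.refl _) (by
      rintro (_|_)
      · simp [d]
        erw [Category.comp_id]
      · simp [d]
        apply colimit.hom_ext
        intro j
        simp
        erw [Category.comp_id]))).symm h0
  -- note: direction: equiv sends IsLimit of small fork to IsLimit of mapCone; we need reverse?

noncomputable def regularMonoColim : RegularMono (colim.map m) where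
  Z := colim.obj (W F G m R)
  left := colim.map (pN F G m R)
  right := colim.map (qN F G m R)
  w := colim_w F G m R
  isLimit := colimForkIsLimit F G m R


end Main

section Conj
variable {D : Type 1} [Category.{0} D]

noncomputable def regularMonoConj {X Y X' Y' : D} (f : X ⟶ Y) (rm : RegularMono f)
    (e : X' ≅ X) (i : Y ≅ Y') : RegularMono (e.hom ≫ f ≫ i.hom) where
  Z := rm.Z
  left := i.inv ≫ rm.left
  right := i.inv ≫ rm.right
  w := by
    simp only [Category.assoc, Iso.hom_inv_id_assoc]
    rw [rm.w]
  isLimit := Fork.IsLimit.mk' _ fun s => by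
    have h : (s.ι ≫ i.inv) ≫ (rm.left : Y ⟶ rm.Z)
        = (s.ι ≫ i.inv) ≫ rm.right := by
      simpa only [Category.assoc] using s.condition
    obtain ⟨l, hl⟩ := rm.lift' (s.ι ≫ i.inv) h
    haveI : Mono (e.hom ≫ f ≫ i.hom) := by
      haveI := rm.mono
      haveI : Mono (f ≫ i.hom) := mono_comp _ _
      exact mono_comp _ _
    refine ⟨l ≫ e.inv, ?_, fun {k} hk => ?_⟩
    · simp only [Fork.ι_ofι, Category.assoc, Iso.inv_hom_id_assoc]
      rw [← Category.assoc, hl, Category.assoc, Iso.inv_hom_id, Category.comp_id]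
    · rw [← cancel_mono (e.hom ≫ f ≫ i.hom)]
      simp only [Fork.ι_ofι] at hk
      rw [hk]
      simp only [Category.assoc, Iso.inv_hom_id_assoc]
      rw [← Category.assoc, hl, Category.assoc, Iso.inv_hom_id, Category.comp_id]

end Conj


end LexProof

/-- Proposition 1(3), second assertion: a filtered colimit of regular monos in `L`
is a regular mono. -/
theorem lex_filtered_colimit_regularMono
    (C : Type) [SmallCategory C] [HasFiniteLimits C]
    (I : Type) [SmallCategory I] [IsFiltered I]
    (F G : I ⥤ LexPSh C) (m : F ⟶ G)
    (cF : Cocone F) (cG : Cocone G) (hF : IsColimit cF) (hG : IsColimit cG)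
    (hm : ∀ i : I, Nonempty (RegularMono (m.app i))) :
    Nonempty (RegularMono (hF.map cG m)) := by
  classical
  have R : ∀ i : I, RegularMono (m.app i) := fun i => (hm i).some
  let eF : cF.pt ≅ colimit F := hF.coconePointUniqueUpToIso (colimit.isColimit F)
  let eG : colimit G ≅ cG.pt := (colimit.isColimit G).coconePointUniqueUpToIso hG
  have key : hF.map cG m = eF.hom ≫ colim.map m ≫ eG.hom := by
    apply hF.hom_ext
    intro i
    rw [IsColimit.ι_map, ← Category.assoc,
      show cF.ι.app i ≫ eF.hom = colimit.ι F i from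
        hF.comp_coconePointUniqueUpToIso_hom (colimit.isColimit F) i,
      colimit.ι_map_assoc,
      show colimit.ι G i ≫ eG.hom = cG.ι.app i from
        (colimit.isColimit G).comp_coconePointUniqueUpToIso_hom hG i]
  have : RegularMono (colim.map m) := LexProof.regularMonoColim F G m R
  rw [key]
  exact ⟨LexProof.regularMonoConj (colim.map m) this eF eG⟩
end

section
/- Let C be a small regular category and let L be the full subcategory of C ⥤ Type on the left exact presheaves. A left exact presheaf P : C ⥤ Type preserves regular epimorphisms if and only if for every regular monomorphism a : A ⟶ B in L between representable presheaves, the precomposition map a* : L(B, P) ⟶ L(A, P) on hom-sets is surjective. -/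
open CategoryTheory CategoryTheory.Limits Opposite

/-- An object of `LexPSh C` is representable if it is isomorphic to some `C(c, -)`. -/
def IsLexRepresentable {C : Type} [SmallCategory C] (A : LexPSh C) : Prop :=
  ∃ c : C, Nonempty (A ≅ lexRepr C c)

/-- A presheaf preserves regular epimorphisms. -/
def PreservesRegularEpis {C : Type} [SmallCategory C] (P : C ⥤ Type) : Prop :=
  ∀ {X Y : C} (f : X ⟶ Y), Nonempty (RegularEpi f) → Nonempty (RegularEpi (P.map f))

attribute [reducible] lexRepr

namespace LexAux

variable {C : Type} [SmallCategory C]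

theorem desc_comm {X Y : C} (f : X ⟶ Y) (hf : RegularEpi f) {z : C} (k : X ⟶ z)
    (hk : hf.left ≫ k = hf.right ≫ k) :
    f ≫ Cofork.IsColimit.desc hf.isColimit k hk = k := by
  simpa using Cofork.IsColimit.π_desc' hf.isColimit k hk

/-- Descend a natural transformation into `coyoneda X` along a regular epi `f : X ⟶ Y`. -/
noncomputable def descNat {X Y : C} (f : X ⟶ Y) (hf : RegularEpi f)
    (T : C ⥤ Type) (ι : T ⟶ coyoneda.obj (op X))
    (hι : ∀ (z : C) (t : T.obj z), hf.left ≫ ι.app z t = hf.right ≫ ι.app z t) :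
    T ⟶ coyoneda.obj (op Y) where
  app z := TypeCat.ofHom fun t => Cofork.IsColimit.desc hf.isColimit (ι.app z t) (hι z t)
  naturality z z' g := by
    haveI := hf.epi
    ext t
    show Cofork.IsColimit.desc hf.isColimit (ι.app z' (T.map g t)) (hι z' (T.map g t)) =
      Cofork.IsColimit.desc hf.isColimit (ι.app z t) (hι z t) ≫ g
    apply (cancel_epi f).1
    rw [← Category.assoc, desc_comm f hf, desc_comm f hf]
    simpa using congr_fun (ι.naturality g) t

theorem descNat_fac {X Y : C} (f : X ⟶ Y) (hf : RegularEpi f)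
    (T : C ⥤ Type) (ι : T ⟶ coyoneda.obj (op X))
    (hι : ∀ (z : C) (t : T.obj z), hf.left ≫ ι.app z t = hf.right ≫ ι.app z t)
    (z : C) (t : T.obj z) :
    f ≫ (descNat f hf T ι hι).app z t = ι.app z t :=
  desc_comm f hf (ι.app z t) (hι z t)

/-- If `f : X ⟶ Y` is a regular epi in `C`, the induced map of representables
`C(Y,-) ⟶ C(X,-)` is a regular mono in the category of left exact presheaves. -/
noncomputable def coyonedaRegularMono {X Y : C} (f : X ⟶ Y) (hf : RegularEpi f) :
    RegularMono (show lexRepr C Y ⟶ lexRepr C X from ObjectProperty.homMk (coyoneda.map f.op)) := by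
  haveI := hf.epi
  refine
    { Z := lexRepr C hf.W
      left := ObjectProperty.homMk (coyoneda.map hf.left.op : coyoneda.obj (op X) ⟶ coyoneda.obj (op hf.W))
      right := ObjectProperty.homMk (coyoneda.map hf.right.op : coyoneda.obj (op X) ⟶ coyoneda.obj (op hf.W))
      w := ?_
      isLimit := ?_ }
  · apply ObjectProperty.hom_ext
    show coyoneda.map f.op ≫ coyoneda.map hf.left.op
        = coyoneda.map f.op ≫ coyoneda.map hf.right.op
    rw [← coyoneda.map_comp, ← coyoneda.map_comp, ← op_comp, ← op_comp, hf.w]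
  · refine Fork.IsLimit.mk _
      (fun s => (ObjectProperty.homMk (descNat f hf s.pt.obj (s.ι.hom : s.pt.obj ⟶ coyoneda.obj (op X))
        (fun z t => ConcreteCategory.congr_hom
          (NatTrans.congr_app (congrArg (fun q => q.hom) s.condition) z) t)) :
          s.pt ⟶ lexRepr C Y))
      (fun s => ?_) (fun s m hm => ?_)
    · refine ObjectProperty.hom_ext _ (NatTrans.ext (funext fun z => ?_))
      ext t
      exact descNat_fac f hf s.pt.obj _ _ z t
    · refine ObjectProperty.hom_ext _ (NatTrans.ext (funext fun z => ?_))
      ext t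
      show (m.hom : s.pt.obj ⟶ coyoneda.obj (op Y)).app z t =
        (descNat f hf s.pt.obj (s.ι.hom : s.pt.obj ⟶ coyoneda.obj (op X)) _).app z t
      apply (cancel_epi f).1
      refine Eq.trans ?_ (descNat_fac f hf s.pt.obj _ _ z t).symm
      exact ConcreteCategory.congr_hom (NatTrans.congr_app (congrArg (fun q => q.hom) hm) z) t

end LexAux

/-- Key observation in the proof of Proposition 5: a left exact presheaf `P` preserves
regular epis iff for every regular mono `a : A ⟶ B` between representables in `L`,
precomposition `a* : L(B, P) ⟶ L(A, P)` is surjective. -/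
theorem lex_preservesRegularEpis_iff_surjective_precomp
    (C : Type) [SmallCategory C] [HasFiniteLimits C]
    (hcoeq : ∀ {X Y : C} (f : X ⟶ Y),
      HasCoequalizer (pullback.fst f f) (pullback.snd f f))
    (hstab : ∀ {X Y Z : C} (f : X ⟶ Y) (g : Z ⟶ Y),
      Nonempty (RegularEpi f) → Nonempty (RegularEpi (pullback.snd f g)))
    (P : LexPSh C) :
    PreservesRegularEpis P.obj ↔
      ∀ (A B : LexPSh C) (a : A ⟶ B), IsLexRepresentable A → IsLexRepresentable B →
        Nonempty (RegularMono a) →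
          Function.Surjective (fun g : B ⟶ P => a ≫ g) := by
  constructor
  · -- forward direction
    intro hP A B a hA hB ha
    obtain ⟨c, ⟨φ⟩⟩ := hA
    obtain ⟨d, ⟨ψ⟩⟩ := hB
    obtain ⟨ra⟩ := ha
    haveI := ra.mono
    -- the composite regular mono between representables
    set a' : lexRepr C c ⟶ lexRepr C d := φ.inv ≫ a ≫ ψ.hom with ha'
    haveI : Mono a' := by
      rw [ha']; infer_instance
    -- the morphism of `C` inducing `a'`
    set f : d ⟶ c := (coyoneda.preimage (a'.hom : coyoneda.obj (op c) ⟶ coyoneda.obj (op d))).unop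
      with hfdef
    have hfa : (coyoneda.map f.op : coyoneda.obj (op c) ⟶ coyoneda.obj (op d)) = a'.hom :=
      coyoneda.map_preimage _
    -- `f` is an epimorphism in `C`
    haveI hepi : Epi f := by
      constructor
      intro W g h hgh
      have hcomp : (show lexRepr C W ⟶ lexRepr C c from ObjectProperty.homMk (coyoneda.map g.op)) ≫ a' =
          (show lexRepr C W ⟶ lexRepr C c from ObjectProperty.homMk (coyoneda.map h.op)) ≫ a' := by
        apply ObjectProperty.hom_ext
        show (coyoneda.map g.op : coyoneda.obj (op W) ⟶ coyoneda.obj (op c)) ≫ a'.hom =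
          coyoneda.map h.op ≫ a'.hom
        rw [← hfa, ← coyoneda.map_comp, ← coyoneda.map_comp, ← op_comp, ← op_comp, hgh]
      have := (cancel_mono a').1 hcomp
      have : g.op = h.op := coyoneda.map_injective (congrArg (fun q => q.hom) this)
      exact Quiver.Hom.op_inj this
    -- image factorization through the coequalizer of the kernel pair
    haveI := hcoeq f
    set Q := coequalizer (pullback.fst f f) (pullback.snd f f) with hQ
    set e : d ⟶ Q := coequalizer.π _ _ with hedef
    set m : Q ⟶ c := coequalizer.desc f pullback.condition with hmdef
    have he : e ≫ m = f := coequalizer.π_desc _ _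
    haveI : Epi e := by rw [hedef]; infer_instance
    -- the pair equalized by `a'`
    set Z : LexPSh C := ra.Z with hZ
    set u : lexRepr C d ⟶ Z := ψ.inv ≫ ra.left with hu
    set v : lexRepr C d ⟶ Z := ψ.inv ≫ ra.right with hv
    have hw : a' ≫ u = a' ≫ v := by
      rw [ha', hu, hv]
      simp only [Category.assoc, Iso.hom_inv_id_assoc]
      rw [ra.w]
    set un : coyoneda.obj (op d) ⟶ Z.obj := u.hom with hun
    set vn : coyoneda.obj (op d) ⟶ Z.obj := v.hom with hvn
    have hz : Z.obj.map f (coyonedaEquiv un) = Z.obj.map f (coyonedaEquiv vn) := by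
      rw [coyonedaEquiv_naturality, coyonedaEquiv_naturality]
      congr 1
      show (coyoneda.map f.op : coyoneda.obj (op c) ⟶ coyoneda.obj (op d)) ≫ un =
        coyoneda.map f.op ≫ vn
      rw [hfa]
      exact congrArg (fun q => q.hom) hw
    -- lexness of Z: get an element of Z(pullback f f) over the two elements
    haveI := Z.property
    have hpl := isLimitOfHasPullbackOfPreservesLimit Z.obj f f
    obtain ⟨l, hl1, hl2⟩ := PullbackCone.IsLimit.lift' hpl
      (TypeCat.ofHom fun _ : PUnit => coyonedaEquiv un) (TypeCat.ofHom fun _ : PUnit => coyonedaEquiv vn)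
      (by ext; exact hz)
    have hr1 : Z.obj.map (pullback.fst f f) (l PUnit.unit) = coyonedaEquiv un :=
      ConcreteCategory.congr_hom hl1 PUnit.unit
    have hr2 : Z.obj.map (pullback.snd f f) (l PUnit.unit) = coyonedaEquiv vn :=
      ConcreteCategory.congr_hom hl2 PUnit.unit
    have key : Z.obj.map e (coyonedaEquiv un) = Z.obj.map e (coyonedaEquiv vn) := by
      rw [← hr1, ← hr2]
      have hc := ConcreteCategory.congr_hom (congrArg Z.obj.map
        (coequalizer.condition (pullback.fst f f) (pullback.snd f f))) (l PUnit.unit)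
      exact (Z.obj.map_comp_apply _ _ _).symm.trans (hc.trans (Z.obj.map_comp_apply _ _ _))
    -- the coequalizer map equalizes u and v
    set b : lexRepr C Q ⟶ lexRepr C d :=
      ObjectProperty.homMk (coyoneda.map e.op : coyoneda.obj (op Q) ⟶ coyoneda.obj (op d)) with hbdef
    have hbu : b ≫ u = b ≫ v := by
      apply ObjectProperty.hom_ext
      apply coyonedaEquiv.injective
      show coyonedaEquiv ((coyoneda.map e.op : coyoneda.obj (op Q) ⟶ coyoneda.obj (op d)) ≫ un)
        = coyonedaEquiv (coyoneda.map e.op ≫ vn)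
      rw [← coyonedaEquiv_naturality, ← coyonedaEquiv_naturality]
      exact key
    -- factor `b` through the equalizer `a`
    obtain ⟨s₀, hs₀⟩ := Fork.IsLimit.lift' ra.isLimit (b ≫ ψ.inv)
      (by rw [Category.assoc, Category.assoc]; exact hbu)
    have hs : s₀ ≫ a = b ≫ ψ.inv := by simpa using hs₀
    set s' : lexRepr C Q ⟶ lexRepr C c := s₀ ≫ φ.hom with hs'def
    have hsa' : s' ≫ a' = b := by
      rw [hs'def, ha']
      simp only [Category.assoc, Iso.hom_inv_id_assoc]
      rw [← Category.assoc, hs, Category.assoc, Iso.inv_hom_id, Category.comp_id]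
    -- obtain `t : c ⟶ Q` with `f ≫ t = e`
    set t : c ⟶ Q :=
      (coyoneda.preimage (s'.hom : coyoneda.obj (op Q) ⟶ coyoneda.obj (op c))).unop with htdef
    have hts : (coyoneda.map t.op : coyoneda.obj (op Q) ⟶ coyoneda.obj (op c)) = s'.hom :=
      coyoneda.map_preimage _
    have hft : f ≫ t = e := by
      have hmm : coyoneda.map (f ≫ t).op = (coyoneda.map e.op :
          coyoneda.obj (op Q) ⟶ coyoneda.obj (op d)) := by
        rw [op_comp, coyoneda.map_comp, hts, hfa]
        exact congrArg (fun q => q.hom) hsa'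
      exact Quiver.Hom.op_inj (coyoneda.map_injective hmm)
    -- `m` is an isomorphism
    have hmt : m ≫ t = 𝟙 Q := by
      rw [← cancel_epi e, Category.comp_id, ← Category.assoc, he, hft]
    have htm : t ≫ m = 𝟙 c := by
      rw [← cancel_epi f, Category.comp_id, ← Category.assoc, hft, he]
    haveI : IsIso m := ⟨t, hmt, htm⟩
    -- `P` maps `f` to a surjection
    have hse : Function.Surjective (P.obj.map e) := by
      obtain ⟨re⟩ := hP e ⟨by rw [hedef]; exact coequalizerRegular _ _⟩
      haveI := re.epi
      exact (epi_iff_surjective _).1 inferInstance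
    have hsm : Function.Surjective (P.obj.map m) :=
      ((isIso_iff_bijective _).1 inferInstance).2
    have hsf : Function.Surjective (P.obj.map f) := by
      rw [← he, P.obj.map_comp]
      exact hsm.comp hse
    -- conclude surjectivity of precomposition
    intro h
    set k : lexRepr C c ⟶ P := φ.inv ≫ h with hk
    obtain ⟨y, hy⟩ := hsf (coyonedaEquiv (k.hom : coyoneda.obj (op c) ⟶ P.obj))
    have hag : a' ≫ (show lexRepr C d ⟶ P from ObjectProperty.homMk (coyonedaEquiv.symm y)) = k := by
      apply ObjectProperty.hom_ext
      apply coyonedaEquiv.injective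
      show coyonedaEquiv ((a'.hom : coyoneda.obj (op c) ⟶ coyoneda.obj (op d)) ≫
        coyonedaEquiv.symm y) = coyonedaEquiv (k.hom : coyoneda.obj (op c) ⟶ P.obj)
      rw [← hfa, ← coyonedaEquiv_naturality, Equiv.apply_symm_apply]
      exact hy
    refine ⟨ψ.hom ≫ (show lexRepr C d ⟶ P from ObjectProperty.homMk (coyonedaEquiv.symm y)), ?_⟩
    show a ≫ ψ.hom ≫ (show lexRepr C d ⟶ P from ObjectProperty.homMk (coyonedaEquiv.symm y)) = h
    calc a ≫ ψ.hom ≫ (show lexRepr C d ⟶ P from ObjectProperty.homMk (coyonedaEquiv.symm y))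
        = φ.hom ≫ a' ≫ (show lexRepr C d ⟶ P from ObjectProperty.homMk (coyonedaEquiv.symm y)) := by
          rw [ha']; simp
      _ = φ.hom ≫ k := by rw [hag]
      _ = h := by rw [hk]; simp
  · -- backward direction
    intro H X Y f hf
    obtain ⟨rf⟩ := hf
    have rm := LexAux.coyonedaRegularMono f rf
    have hsurj := H (lexRepr C Y) (lexRepr C X)
      (show lexRepr C Y ⟶ lexRepr C X from ObjectProperty.homMk (coyoneda.map f.op))
      ⟨Y, ⟨Iso.refl _⟩⟩ ⟨X, ⟨Iso.refl _⟩⟩ ⟨rm⟩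
    have hsf : Function.Surjective (P.obj.map f) := by
      intro y
      obtain ⟨g, hg⟩ := hsurj (show lexRepr C Y ⟶ P from ObjectProperty.homMk (coyonedaEquiv.symm y))
      refine ⟨coyonedaEquiv (g.hom : coyoneda.obj (op X) ⟶ P.obj), ?_⟩
      rw [coyonedaEquiv_naturality]
      rw [show (coyoneda.map f.op ≫ (g.hom : coyoneda.obj (op X) ⟶ P.obj)) =
        coyonedaEquiv.symm y from congrArg (fun q => q.hom) hg]
      exact Equiv.apply_symm_apply _ _
    haveI : Epi (P.obj.map f) := (epi_iff_surjective _).2 hsf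
    haveI := isSplitEpi_of_epi (P.obj.map f)
    exact ⟨RegularEpi.ofSplitEpi _⟩
end

section
/- Let C be a small regular category, let L be the full subcategory of C ⥤ Type on the left exact presheaves, and let T be any full subcategory of L all of whose objects are regular functors. Then the evaluation functor E : C ⥤ (T ⥤ Type), sending an object c of C to the functor T ↦ T(c), preserves finite limits and regular epimorphisms (i.e. E is a regular functor). -/
open CategoryTheory CategoryTheory.Limits

/-- The evaluation functor `E : C ⥤ (T ⥤ Type)`, `c ↦ (T ↦ T(c))`, for a full
subcategory `T` of `L` cut out by a predicate `pred`. -/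
def evalIntoSub (C : Type) [SmallCategory C] (pred : LexPSh C → Prop) :
    C ⥤ (ObjectProperty.FullSubcategory pred ⥤ Type) :=
  evaluation C Type ⋙ (Functor.whiskeringLeft (ObjectProperty.FullSubcategory pred) (C ⥤ Type) Type).obj
    (ObjectProperty.ι pred ⋙ ObjectProperty.ι _)

/-- `E` composed with evaluation at `T` is just the presheaf `T` itself. -/
def evalIntoSubCompIso (C : Type) [SmallCategory C] (pred : LexPSh C → Prop)
    (T : ObjectProperty.FullSubcategory pred) :
    T.obj.obj ≅ evalIntoSub C pred ⋙ (evaluation (ObjectProperty.FullSubcategory pred) Type).obj T :=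
  NatIso.ofComponents (fun _ => Iso.refl _) (by intros; rfl)

/-- If every object of the full subcategory `T ⊆ L` is a regular functor, then the
evaluation functor `E : C ⥤ (T ⥤ Type)` preserves finite limits and regular epis. -/
theorem evalIntoSub_regular
    (C : Type) [SmallCategory C] [HasFiniteLimits C]
    (hcoeq : ∀ {X Y : C} (f : X ⟶ Y),
      HasCoequalizer (pullback.fst f f) (pullback.snd f f))
    (hstab : ∀ {X Y Z : C} (f : X ⟶ Y) (g : Z ⟶ Y),
      Nonempty (RegularEpi f) → Nonempty (RegularEpi (pullback.snd f g)))
    (pred : LexPSh C → Prop)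
    (hpred : ∀ F : LexPSh C, pred F → PreservesRegularEpis F.obj) :
    PreservesFiniteLimits (evalIntoSub C pred) ∧
      ∀ {X Y : C} (f : X ⟶ Y), Nonempty (RegularEpi f) →
        Nonempty (RegularEpi ((evalIntoSub C pred).map f)) := by
  constructor
  · constructor
    intro J _ _
    apply preservesLimitsOfShape_of_evaluation
    intro T
    have : PreservesFiniteLimits T.obj.obj := T.obj.property
    exact preservesLimitsOfShape_of_natIso (evalIntoSubCompIso C pred T)
  · intro X Y f hf
    have hreg : RegularEpi f := hf.some
    -- kernel pair of `f`
    have k : IsKernelPair f (pullback.fst f f) (pullback.snd f f) :=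
      IsPullback.of_hasPullback f f
    set E := evalIntoSub C pred with hE
    have w : E.map (pullback.fst f f) ≫ E.map f = E.map (pullback.snd f f) ≫ E.map f := by
      rw [← E.map_comp, ← E.map_comp, pullback.condition]
    refine ⟨⟨E.obj (pullback f f), E.map (pullback.fst f f), E.map (pullback.snd f f), w, ?_⟩⟩
    apply evaluationJointlyReflectsColimits
    intro T
    have hlex : PreservesFiniteLimits T.obj.obj := T.obj.property
    -- `T` applied to the kernel pair is a kernel pair
    have k' : IsKernelPair (T.obj.obj.map f)
        (T.obj.obj.map (pullback.fst f f)) (T.obj.obj.map (pullback.snd f f)) :=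
      k.map T.obj.obj
    have hTf : RegularEpi (T.obj.obj.map f) := (hpred T.obj T.property f hf).some
    have hcolim : IsColimit (Cofork.ofπ (T.obj.obj.map f) k'.w) := k'.toCoequalizer hTf
    exact (isColimitMapCoconeCoforkEquiv
      ((evaluation (ObjectProperty.FullSubcategory pred) Type).obj T) w).symm hcolim
end
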